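/- arXiv:1809.10508 — 3 statements merged into one kernel-verified Lean document; each statement's English description precedes it below -/
import Mathlib

section
/- Let G be a cube-free median graph and let T be a tree subgraph of G rooted at a vertex r such that T has gated branches, i.e., for every vertex x of T the unique path of T from x to r is a gated set of G. Then T is quasigated: for every vertex u of G not in T, the imprint set Imp(u, T) = {a ∈ V(T) : I(u,a) ∩ V(T) = {a}} has at most two elements. -/
open SimpleGraph Set

/-- The metric interval `I(u,v)` in a graph `G`. -/
def gInterval {V : Type*} (G : SimpleGraph V) (u v : V) : Set V :=
  {w | G.dist u w + G.dist w v = G.dist u v}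

/-- A median graph: a connected graph in which every triplet of vertices has a
unique median, i.e. a unique vertex in `I(x,y) ∩ I(y,z) ∩ I(z,x)`. -/
def MedianGraph {V : Type*} (G : SimpleGraph V) : Prop :=
  G.Connected ∧ ∀ x y z : V,
    ∃! m : V, m ∈ gInterval G x y ∧ m ∈ gInterval G y z ∧ m ∈ gInterval G z x

/-- `G` contains an induced `d`-dimensional hypercube all of whose vertices lie in `S`. -/
def HasCubeIn {V : Type*} (G : SimpleGraph V) (d : ℕ) (S : Set V) : Prop :=
  ∃ f : Finset (Fin d) → V, Function.Injective f ∧ (∀ A, f A ∈ S) ∧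
    ∀ A B : Finset (Fin d), G.Adj (f A) (f B) ↔ (symmDiff A B).card = 1

/-- `G` contains an induced `d`-dimensional hypercube `Q_d`. -/
def HasInducedCube {V : Type*} (G : SimpleGraph V) (d : ℕ) : Prop :=
  HasCubeIn G d Set.univ

/-- A cube-free (median) graph: no induced 3-dimensional hypercube. -/
def CubeFree {V : Type*} (G : SimpleGraph V) : Prop :=
  ¬ HasInducedCube G 3

/-- `g` is a gate of `v` in the set `S`. -/
def IsGate {V : Type*} (G : SimpleGraph V) (S : Set V) (v g : V) : Prop :=
  g ∈ S ∧ ∀ u ∈ S, G.dist v u = G.dist v g + G.dist g u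

/-- A set of vertices is gated if every vertex has a gate in it. -/
def Gated {V : Type*} (G : SimpleGraph V) (S : Set V) : Prop :=
  ∀ v : V, ∃ g : V, IsGate G S v g

/-- A set of vertices is convex if it contains the interval between any two of its members. -/
def GConvex {V : Type*} (G : SimpleGraph V) (S : Set V) : Prop :=
  ∀ u ∈ S, ∀ v ∈ S, gInterval G u v ⊆ S

/-- The star `St(z)`: the set of vertices lying in some induced hypercube of `G`
containing `z`. -/
def gStar {V : Type*} (G : SimpleGraph V) (z : V) : Set V :=
  {v | ∃ (d : ℕ) (f : Finset (Fin d) → V), Function.Injective f ∧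
      (∀ A B : Finset (Fin d), G.Adj (f A) (f B) ↔ (symmDiff A B).card = 1) ∧
      (∃ A, f A = z) ∧ (∃ A, f A = v)}

/-- The fiber `F(x)` of `x` with respect to a (gated) set `H`: all vertices having `x`
as their gate in `H`. -/
def fiber {V : Type*} (G : SimpleGraph V) (H : Set V) (x : V) : Set V :=
  {v | IsGate G H v x}

/-- Two fibers are neighboring when an edge of `G` joins them. -/
def Neighboring {V : Type*} (G : SimpleGraph V) (H : Set V) (x y : V) : Prop :=
  ∃ a ∈ fiber G H x, ∃ b ∈ fiber G H y, G.Adj a b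

/-- The boundary `∂_y F(x)`: vertices of `F(x)` having a neighbor in `F(y)`. -/
def bdry {V : Type*} (G : SimpleGraph V) (H : Set V) (x y : V) : Set V :=
  {a | a ∈ fiber G H x ∧ ∃ b ∈ fiber G H y, G.Adj a b}

/-- The total boundary `∂*F(x)`: union of the boundaries `∂_y F(x)` over all `y ∈ H`
adjacent to `x`. -/
def totalBdry {V : Type*} (G : SimpleGraph V) (H : Set V) (x : V) : Set V :=
  ⋃ (y : V) (_ : y ∈ H ∧ G.Adj x y), bdry G H x y

/-- The imprint set of `u` on `A`. -/
def imprints {V : Type*} (G : SimpleGraph V) (u : V) (A : Set V) : Set V :=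
  {a ∈ A | gInterval G u a ∩ A = {a}}

/-- The halfspace `W(u,v)` associated with an edge `uv`. -/
def halfspaceW {V : Type*} (G : SimpleGraph V) (u v : V) : Set V :=
  {z | G.dist z u < G.dist z v}

namespace QG

open SimpleGraph

variable {V : Type*} {G : SimpleGraph V}

lemma dcomm (G : SimpleGraph V) (a b : V) : G.dist a b = G.dist b a :=
  SimpleGraph.dist_comm

lemma mem_gI {u v w : V} : w ∈ gInterval G u v ↔ G.dist u w + G.dist w v = G.dist u v :=
  Iff.rfl

lemma gI_left {u v : V} : u ∈ gInterval G u v := by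
  simp [mem_gI]

lemma gI_right {u v : V} : v ∈ gInterval G u v := by
  simp [mem_gI]

lemma gI_symm {u v w : V} (h : w ∈ gInterval G u v) : w ∈ gInterval G v u := by
  rw [mem_gI] at h ⊢
  rw [dcomm G v w, dcomm G w u, dcomm G v u]
  omega

section Conn

variable (hc : G.Connected)
include hc

lemma dtri (a b c : V) : G.dist a c ≤ G.dist a b + G.dist b c :=
  hc.dist_triangle

lemma dist_eq_zero {x y : V} (h : G.dist x y = 0) : x = y :=
  (hc.dist_eq_zero_iff).1 h

lemma dist_pos {x y : V} (h : x ≠ y) : 0 < G.dist x y :=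
  hc.pos_dist_of_ne h

/-- If `b ∈ I(u,c)` and `w ∈ I(b,c)` then `w ∈ I(u,c)` and `b ∈ I(u,w)`. -/
lemma interval_trans {u b c w : V} (hb : b ∈ gInterval G u c) (hw : w ∈ gInterval G b c) :
    w ∈ gInterval G u c ∧ b ∈ gInterval G u w := by
  rw [mem_gI] at hb hw
  have t1 := dtri hc u b w
  have t2 := dtri hc u w c
  constructor <;> · rw [mem_gI]; omega

/-- If `b ∈ I(u,c)` and `w ∈ I(u,b)` then `w ∈ I(u,c)` and `b ∈ I(w,c)`. -/
lemma interval_trans' {u b c w : V} (hb : b ∈ gInterval G u c) (hw : w ∈ gInterval G u b) :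
    w ∈ gInterval G u c ∧ b ∈ gInterval G w c := by
  rw [mem_gI] at hb hw
  have t1 := dtri hc w b c
  have t2 := dtri hc u w c
  constructor <;> · rw [mem_gI]; omega

lemma exists_step {x y : V} (h : x ≠ y) :
    ∃ t, G.dist x t = 1 ∧ t ∈ gInterval G x y := by
  obtain ⟨p, hp⟩ := hc.exists_walk_length_eq_dist x y
  have hd : 0 < G.dist x y := dist_pos hc h
  cases p with
  | nil => simp at hp; exact absurd rfl h
  | cons a rest =>
    rename_i v
    refine ⟨v, dist_eq_one_iff_adj.2 a, ?_⟩
    have h1 : G.dist x v = 1 := dist_eq_one_iff_adj.2 a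
    have h2 : G.dist v y ≤ rest.length := SimpleGraph.dist_le rest
    have h3 := dtri hc x v y
    simp only [SimpleGraph.Walk.length_cons] at hp
    rw [mem_gI]
    omega

end Conn

/-- height sum for an upper bound realized on a geodesic. -/
lemma ub_height {u z w J : V} (hz : z ∈ gInterval G u J) (hw : w ∈ gInterval G u J)
    (hJ : J ∈ gInterval G z w) : 2 * G.dist u J = G.dist u z + G.dist u w + G.dist z w := by
  rw [mem_gI] at hz hw hJ
  rw [dcomm G w J] at hw
  omega

section Med

variable (hG : MedianGraph G)
include hG

noncomputable def med (x y z : V) : V := (hG.2 x y z).exists.choose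

lemma med_spec (x y z : V) :
    med hG x y z ∈ gInterval G x y ∧ med hG x y z ∈ gInterval G y z ∧
      med hG x y z ∈ gInterval G z x :=
  (hG.2 x y z).exists.choose_spec

lemma med_eq {x y z m : V} (h1 : m ∈ gInterval G x y) (h2 : m ∈ gInterval G y z)
    (h3 : m ∈ gInterval G z x) : med hG x y z = m :=
  ((hG.2 x y z).unique (med_spec hG x y z) ⟨h1, h2, h3⟩)

lemma med_unique {x y z m m' : V} (h1 : m ∈ gInterval G x y) (h2 : m ∈ gInterval G y z)
    (h3 : m ∈ gInterval G z x) (h1' : m' ∈ gInterval G x y) (h2' : m' ∈ gInterval G y z)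
    (h3' : m' ∈ gInterval G z x) : m = m' := by
  rw [← med_eq hG h1 h2 h3, med_eq hG h1' h2' h3']

/-- the meet of `x` and `y` over basepoint `u`. -/
noncomputable def meet (u x y : V) : V := med hG x y u

lemma meet_mem_x (u x y : V) : meet hG u x y ∈ gInterval G u x :=
  (med_spec hG x y u).2.2

lemma meet_mem_y (u x y : V) : meet hG u x y ∈ gInterval G u y :=
  gI_symm (med_spec hG x y u).2.1

lemma meet_mem_I (u x y : V) : meet hG u x y ∈ gInterval G x y :=
  (med_spec hG x y u).1

lemma meet_eq {u x y m : V} (h1 : m ∈ gInterval G u x) (h2 : m ∈ gInterval G u y)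
    (h3 : m ∈ gInterval G x y) : meet hG u x y = m :=
  med_eq hG h3 (gI_symm h2) h1

lemma meet_comm (u x y : V) : meet hG u x y = meet hG u y x :=
  (meet_eq hG (meet_mem_y hG u x y) (meet_mem_x hG u x y)
    (gI_symm (meet_mem_I hG u x y))).symm

omit hG in
/-- `I(x,x) = {x}` -/
lemma gI_self (hc : G.Connected) {x w : V} (h : w ∈ gInterval G x x) : w = x := by
  rw [mem_gI] at h
  simp only [SimpleGraph.dist_self] at h
  exact (dist_eq_zero hc (by omega : G.dist x w = 0)).symm

lemma meet_self (hc : G.Connected) (u x : V) : meet hG u x x = x :=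
  meet_eq hG gI_right gI_right gI_left

lemma meet_base (u y : V) : meet hG u u y = u :=
  meet_eq hG gI_left gI_left gI_left

/-- key: `I(u,x) ∩ I(u,y) ⊆ I(u, meet u x y)`. -/
lemma meet_inter {u x y w : V} (hc : G.Connected)
    (hx : w ∈ gInterval G u x) (hy : w ∈ gInterval G u y) :
    w ∈ gInterval G u (meet hG u x y) := by
  obtain ⟨hz1, hz2, hz3⟩ := med_spec hG x y w
  set z := med hG x y w with hz
  have hzx : z ∈ gInterval G w x := hz3
  have hzy : z ∈ gInterval G w y := gI_symm hz2
  have h1 := interval_trans hc hx hzx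
  have h2 := interval_trans hc hy hzy
  have : meet hG u x y = z := meet_eq hG h1.1 h2.1 hz1
  rw [this]
  exact h1.2

/-- bipartite-type fact: neighbours have different distances to every vertex. -/
lemma adj_dist_ne (hc : G.Connected) {x y : V} (hxy : G.Adj x y) (z : V) :
    G.dist z x ≠ G.dist z y := by
  have hd : G.dist x y = 1 := dist_eq_one_iff_adj.2 hxy
  obtain ⟨h1, h2, h3⟩ := med_spec hG x y z
  set m := med hG x y z
  rw [mem_gI] at h1 h2 h3
  have : G.dist x m = 0 ∨ G.dist m y = 0 := by omega
  have c1 : G.dist y x = 1 := by rw [dcomm G y x]; exact hd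
  rcases this with h | h
  · have hh : x = m := dist_eq_zero hc h
    rw [← hh] at h2
    have c2 : G.dist z y = G.dist y z := dcomm G z y
    have c3 : G.dist z x = G.dist x z := dcomm G z x
    omega
  · have hh : m = y := dist_eq_zero hc h
    rw [hh] at h3
    omega

/-- no triangles -/
lemma no_triangle (hc : G.Connected) {x y z : V} (h1 : G.Adj x y) (h2 : G.Adj y z)
    (h3 : G.Adj x z) : False := by
  have := adj_dist_ne hG hc h2 x
  rw [dist_eq_one_iff_adj.2 h1, dist_eq_one_iff_adj.2 h3] at this
  exact this rfl

/-- the join `med x y t` facts, for `x,y ∈ I(u,t)`. -/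
lemma join_above {u x y t : V} (hc : G.Connected) (hx : x ∈ gInterval G u t)
    (hy : y ∈ gInterval G u t) :
    x ∈ gInterval G u (med hG x y t) ∧ y ∈ gInterval G u (med hG x y t) ∧
      med hG x y t ∈ gInterval G u t ∧ med hG x y t ∈ gInterval G x y := by
  obtain ⟨h1, h2, h3⟩ := med_spec hG x y t
  set J := med hG x y t
  have a1 := interval_trans hc hx (gI_symm h3)
  have a2 := interval_trans hc hy h2
  exact ⟨a1.2, a2.2, a1.1, h1⟩

/-- modular law: `d(u, x∧y) + d(u, x∨y) = d(u,x)+d(u,y)`. -/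
lemma mod_sum {u x y t : V} (hc : G.Connected) (hx : x ∈ gInterval G u t)
    (hy : y ∈ gInterval G u t) :
    G.dist u (meet hG u x y) + G.dist u (med hG x y t) = G.dist u x + G.dist u y := by
  obtain ⟨j1, j2, j3, j4⟩ := join_above hG hc hx hy
  have hub := ub_height j1 j2 j4
  have m1 := meet_mem_x hG u x y
  have m2 := meet_mem_y hG u x y
  have m3 := meet_mem_I hG u x y
  rw [mem_gI] at m1 m2 m3
  have c : G.dist x (meet hG u x y) = G.dist (meet hG u x y) x := dcomm G x _
  omega

/-- the join is below every common upper bound. -/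
lemma join_le {u x y t v : V} (hc : G.Connected) (hx : x ∈ gInterval G u t)
    (hy : y ∈ gInterval G u t) (hx' : x ∈ gInterval G u v) (hy' : y ∈ gInterval G u v) :
    med hG x y t ∈ gInterval G u v := by
  obtain ⟨j1, j2, j3, j4⟩ := join_above hG hc hx hy
  have hxu : x ∈ gInterval G u (meet hG u (med hG x y t) v) := meet_inter hG hc j1 hx'
  have hyu : y ∈ gInterval G u (meet hG u (med hG x y t) v) := meet_inter hG hc j2 hy'
  set J := med hG x y t with hJdef
  set μ := meet hG u J v with hμdef
  have hμJ : μ ∈ gInterval G u J := meet_mem_x hG u J v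
  have hμv : μ ∈ gInterval G u v := meet_mem_y hG u J v
  obtain ⟨e1, e2, e3⟩ := med_spec hG x μ y
  set ξ := med hG x μ y
  have hxξ := interval_trans hc hxu e1
  have hyξ := interval_trans hc hyu (gI_symm e2)
  have hξμ : ξ ∈ gInterval G u μ := hxξ.1
  have hξJ : ξ ∈ gInterval G u J := (interval_trans' hc hμJ hξμ).1
  have h1 := ub_height j1 j2 j4
  have h2 := ub_height hxξ.2 hyξ.2 (gI_symm e3)
  have hμeq : μ = J := by
    rw [mem_gI] at hξJ hξμ hμJ
    have t1 := dtri hc u μ J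
    have : G.dist μ J = 0 := by omega
    exact dist_eq_zero hc this
  rw [← hμeq]
  exact hμv

/-- the join does not depend on the chosen top. -/
lemma join_unique {u x y t t' : V} (hc : G.Connected) (hx : x ∈ gInterval G u t)
    (hy : y ∈ gInterval G u t) (hx' : x ∈ gInterval G u t') (hy' : y ∈ gInterval G u t') :
    med hG x y t = med hG x y t' := by
  obtain ⟨j1, j2, j3, j4⟩ := join_above hG hc hx hy
  obtain ⟨k1, k2, k3, k4⟩ := join_above hG hc hx' hy'
  have h1 : med hG x y t ∈ gInterval G u (med hG x y t') := join_le hG hc hx hy k1 k2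
  have h2 : med hG x y t' ∈ gInterval G u (med hG x y t) := join_le hG hc hx' hy' j1 j2
  rw [mem_gI] at h1 h2
  rw [dcomm G (med hG x y t') (med hG x y t)] at h2
  exact dist_eq_zero hc (by omega : G.dist (med hG x y t) (med hG x y t') = 0)

end Med

end QG
namespace QG

open SimpleGraph

variable {V : Type*} {G : SimpleGraph V}

lemma gI_dist_le {u v w : V} (h : w ∈ gInterval G u v) : G.dist u w ≤ G.dist u v := by
  rw [mem_gI] at h; omega

lemma eq_of_height (hc : G.Connected) {u v w : V} (h : w ∈ gInterval G u v)
    (he : G.dist u w = G.dist u v) : w = v := by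
  rw [mem_gI] at h
  exact dist_eq_zero hc (by omega : G.dist w v = 0)

lemma gI_antisymm (hc : G.Connected) {u a b : V} (h1 : a ∈ gInterval G u b)
    (h2 : b ∈ gInterval G u a) : a = b := by
  rw [mem_gI] at h1 h2
  exact dist_eq_zero hc (by omega : G.dist a b = 0)

section Med

variable (hG : MedianGraph G) (hc : G.Connected)
include hG hc

lemma med_swap12 (a b c : V) : med hG a b c = med hG b a c := by
  obtain ⟨h1, h2, h3⟩ := med_spec hG b a c
  exact med_eq hG (gI_symm h1) (gI_symm h3) (gI_symm h2)

omit hc in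
lemma meet_swap_args (u x y : V) : meet hG u x y = med hG x y u := rfl

/-- if `t` is an atom not below `z`, then `t ∧ z = u`. -/
lemma meet_atom {u t z : V} (htd : G.dist u t = 1) (htz : t ∉ gInterval G u z) :
    meet hG u t z = u := by
  have hm := meet_mem_x hG u t z
  have hle := gI_dist_le hm
  rcases Nat.lt_or_ge (G.dist u (meet hG u t z)) 1 with h | h
  · have : u = meet hG u t z := dist_eq_zero hc (by omega)
    exact this.symm
  · exfalso
    have heq : meet hG u t z = t := eq_of_height hc hm (by omega)
    have : t ∈ gInterval G u z := by rw [← heq]; exact meet_mem_y hG u t z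
    exact htz this

/-- three atoms under a height-2 vertex give two medians: impossible. -/
lemma atom_split {u z1 z3 tt t : V}
    (h13 : meet hG u z1 z3 = u)
    (hz1 : z1 ∈ gInterval G u tt) (hz3 : z3 ∈ gInterval G u tt)
    (ht : t ∈ gInterval G u (med hG z1 z3 tt))
    (htd : G.dist u t = 1) :
    t ∈ gInterval G u z1 ∨ t ∈ gInterval G u z3 := by
  by_contra hcon
  push_neg at hcon
  obtain ⟨ht1, ht3⟩ := hcon
  obtain ⟨hj1, hj3, hJt, hJm⟩ := join_above hG hc hz1 hz3
  set J := med hG z1 z3 tt with hJdef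
  set h1 := G.dist u z1 with hh1
  set h3 := G.dist u z3 with hh3
  -- u ∈ I(z1,z3)
  have hu13 : G.dist z1 u + G.dist u z3 = G.dist z1 z3 := by
    have := meet_mem_I hG u z1 z3
    rw [h13] at this
    exact this
  have hcz1 : G.dist z1 u = h1 := dcomm G z1 u ▸ rfl
  -- d u J = h1 + h3
  have hJh : 2 * G.dist u J = h1 + h3 + G.dist z1 z3 := ub_height hj1 hj3 hJm
  have hdJ : G.dist u J = h1 + h3 := by
    rw [mem_gI] at *
    omega
  -- meets with t are trivial
  have hm1 : meet hG u t z1 = u := meet_atom hG hc htd ht1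
  have hm3 : meet hG u t z3 = u := meet_atom hG hc htd ht3
  have hu_t1 : G.dist t u + G.dist u z1 = G.dist t z1 := by
    have := meet_mem_I hG u t z1; rw [hm1] at this; exact this
  have hu_t3 : G.dist t u + G.dist u z3 = G.dist t z3 := by
    have := meet_mem_I hG u t z3; rw [hm3] at this; exact this
  have hctu : G.dist t u = 1 := by rw [dcomm G t u]; exact htd
  -- joins W1, W3
  obtain ⟨w11, w12, w13, w14⟩ := join_above hG hc ht hj1
  set W1 := med hG t z1 J with hW1def
  have hW1 : G.dist u W1 = 1 + h1 := by
    have := ub_height w11 w12 w14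
    omega
  obtain ⟨w31, w32, w33, w34⟩ := join_above hG hc ht hj3
  set W3 := med hG t z3 J with hW3def
  have hW3 : G.dist u W3 = 1 + h3 := by
    have := ub_height w31 w32 w34
    omega
  -- J2 = J
  obtain ⟨j21, j22, j23, j24⟩ := join_above hG hc w13 w33
  set J2 := med hG W1 W3 J with hJ2def
  have hz1J2 : z1 ∈ gInterval G u J2 := (interval_trans' hc j21 w12).1
  have hz3J2 : z3 ∈ gInterval G u J2 := (interval_trans' hc j22 w32).1
  have hJJ2 : J ∈ gInterval G u J2 := join_le hG hc hz1 hz3 hz1J2 hz3J2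
  have hJ2J : J2 = J := gI_antisymm hc j23 hJJ2
  -- d W1 W3
  have hWW : 2 * G.dist u J = G.dist u W1 + G.dist u W3 + G.dist W1 W3 := by
    have := ub_height j21 j22 j24
    rw [hJ2J] at this
    exact this
  -- g := W1 ∧ W3 has height 2
  set g := meet hG u W1 W3 with hgdef
  have hg2 : G.dist u g = 2 := by
    have hms := mod_sum hG hc w13 w33
    rw [← hgdef, ← hJ2def, hJ2J] at hms
    omega
  -- t ≤ g
  have htg : t ∈ gInterval G u g := meet_inter hG hc w11 w31
  -- q1 := g ∧ z1 is an atom, similarly q3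
  have key : ∀ zz WW : V, G.dist u zz + 1 = G.dist u WW →
      zz ∈ gInterval G u WW → WW ∈ gInterval G u J → t ∈ gInterval G u WW →
      (t ∉ gInterval G u zz) → g ∈ gInterval G u WW →
      G.dist u (meet hG u g zz) = 1 ∧ meet hG u g zz ≠ t := by
    intro zz WW hht hzW hWJ htW htzz hgW
    set q := meet hG u g zz with hq
    have hqg : q ∈ gInterval G u g := meet_mem_x hG u g zz
    have hqz : q ∈ gInterval G u zz := meet_mem_y hG u g zz
    -- upper bound: q ∧ t = u, then join q∨t ≤ g forces d u q ≤ 1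
    have hqt : meet hG u q t = u := by
      have hmm := meet_mem_y hG u q t
      have hle := gI_dist_le hmm
      rcases Nat.lt_or_ge (G.dist u (meet hG u q t)) 1 with h | h
      · exact (dist_eq_zero hc (by omega)).symm
      · exfalso
        have hqt' : meet hG u q t = t := eq_of_height hc hmm (by omega)
        have : t ∈ gInterval G u q := hqt' ▸ meet_mem_x hG u q t
        exact htzz (interval_trans' hc hqz this).1
    have hjoin := mod_sum hG hc hqg htg
    rw [hqt] at hjoin
    simp only [SimpleGraph.dist_self] at hjoin
    have hjle : G.dist u (med hG q t g) ≤ 2 := by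
      have h' := gI_dist_le (join_above hG hc hqg htg).2.2.1
      omega
    have hup : G.dist u q ≤ 1 := by omega
    -- lower bound: join g∨zz ≤ WW forces d u q ≥ 1
    have hlow : 1 ≤ G.dist u q := by
      have hms := mod_sum hG hc hgW hzW
      rw [← hq] at hms
      have hle2 := gI_dist_le (join_above hG hc hgW hzW).2.2.1
      have hle3 := gI_dist_le hWJ
      omega
    have hd1 : G.dist u q = 1 := le_antisymm hup hlow
    refine ⟨hd1, ?_⟩
    intro hqeq
    rw [hqeq] at hqz
    exact htzz hqz
  have hk1 := key z1 W1 (by omega) w12 w13 w11 ht1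
    (by rw [hgdef]; exact meet_mem_x hG u W1 W3)
  have hk3 := key z3 W3 (by omega) w32 w33 w31 ht3
    (by rw [hgdef]; exact meet_mem_y hG u W1 W3)
  set q1 := meet hG u g z1 with hq1def
  set q3 := meet hG u g z3 with hq3def
  -- q1 ≠ q3
  have hq13 : q1 ≠ q3 := by
    intro he
    have h1' : q1 ∈ gInterval G u z1 := meet_mem_y hG u g z1
    have h3' : q1 ∈ gInterval G u z3 := he ▸ meet_mem_y hG u g z3
    have := meet_inter hG hc h1' h3'
    rw [h13] at this
    have := gI_self hc this
    rw [this] at hk1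
    simp [SimpleGraph.dist_self] at hk1
  -- pairwise distance-2 facts and memberships
  have hq1z : q1 ∈ gInterval G u z1 := meet_mem_y hG u g z1
  have hq3z : q3 ∈ gInterval G u z3 := meet_mem_y hG u g z3
  have hq1g : q1 ∈ gInterval G u g := meet_mem_x hG u g z1
  have hq3g : q3 ∈ gInterval G u g := meet_mem_x hG u g z3
  -- meet q1 t = u  (since t ∉ I u z1 ⊇ I u q1-chain)
  have hmq1t : meet hG u q1 t = u := by
    have hmm := meet_mem_y hG u q1 t
    have hle := gI_dist_le hmm
    rcases Nat.lt_or_ge (G.dist u (meet hG u q1 t)) 1 with h | h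
    · exact (dist_eq_zero hc (by omega)).symm
    · exfalso
      have hqt' : meet hG u q1 t = t := eq_of_height hc hmm (by omega)
      have : t ∈ gInterval G u q1 := hqt' ▸ meet_mem_x hG u q1 t
      exact ht1 (interval_trans' hc hq1z this).1
  have hmq3t : meet hG u q3 t = u := by
    have hmm := meet_mem_y hG u q3 t
    have hle := gI_dist_le hmm
    rcases Nat.lt_or_ge (G.dist u (meet hG u q3 t)) 1 with h | h
    · exact (dist_eq_zero hc (by omega)).symm
    · exfalso
      have hqt' : meet hG u q3 t = t := eq_of_height hc hmm (by omega)
      have : t ∈ gInterval G u q3 := hqt' ▸ meet_mem_x hG u q3 t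
      exact ht3 (interval_trans' hc hq3z this).1
  have hmq13 : meet hG u q1 q3 = u := by
    have hx : meet hG u q1 q3 ∈ gInterval G u z1 :=
      (interval_trans' hc hq1z (meet_mem_x hG u q1 q3)).1
    have hy : meet hG u q1 q3 ∈ gInterval G u z3 :=
      (interval_trans' hc hq3z (meet_mem_y hG u q1 q3)).1
    have := meet_inter hG hc hx hy
    rw [h13] at this
    exact gI_self hc this
  -- distances
  have e1 : G.dist q1 u + G.dist u t = G.dist q1 t := by
    have := meet_mem_I hG u q1 t; rw [hmq1t] at this; exact this
  have e3 : G.dist q3 u + G.dist u t = G.dist q3 t := by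
    have := meet_mem_I hG u q3 t; rw [hmq3t] at this; exact this
  have e13 : G.dist q1 u + G.dist u q3 = G.dist q1 q3 := by
    have := meet_mem_I hG u q1 q3; rw [hmq13] at this; exact this
  have cq1 : G.dist q1 u = 1 := by rw [dcomm G q1 u]; exact hk1.1
  have cq3 : G.dist q3 u = 1 := by rw [dcomm G q3 u]; exact hk3.1
  -- g-side distances: d q1 g = 1, d t g = 1, d q3 g = 1
  have f1 : G.dist q1 g = 1 := by
    have := hq1g; rw [mem_gI] at this; rw [hk1.1] at this; omega
  have f3 : G.dist q3 g = 1 := by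
    have := hq3g; rw [mem_gI] at this; rw [hk3.1] at this; omega
  have ftg : G.dist t g = 1 := by
    have := htg; rw [mem_gI] at this; rw [htd] at this; omega
  -- two medians of the triple (t, q1, q3): u and g
  obtain ⟨hk11, hk12⟩ := hk1
  obtain ⟨hk31, hk32⟩ := hk3
  have hune : u ≠ g := by
    intro h; rw [← h] at hg2; simp [SimpleGraph.dist_self] at hg2
  apply hune
  have dt1 : G.dist t q1 = 2 := by rw [dcomm G t q1]; omega
  have dt3 : G.dist t q3 = 2 := by rw [dcomm G t q3]; omega
  have d13 : G.dist q1 q3 = 2 := by omega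
  have c1 : G.dist q3 t = G.dist t q3 := dcomm G q3 t
  have c2 : G.dist g t = G.dist t g := dcomm G g t
  have c3 : G.dist g q1 = G.dist q1 g := dcomm G g q1
  have c4 : G.dist g q3 = G.dist q3 g := dcomm G g q3
  have c5 : G.dist u q1 = 1 := hk11
  have c6 : G.dist u q3 = 1 := hk31
  have c7 : G.dist u t = 1 := htd
  refine med_unique hG (x := t) (y := q1) (z := q3) ?_ ?_ ?_ ?_ ?_ ?_ <;>
    · rw [mem_gI]; omega

end Med

end QG
namespace QG

open SimpleGraph

variable {V : Type*} {G : SimpleGraph V}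

section Box

variable (hG : MedianGraph G) (hc : G.Connected)
include hG hc

lemma box_branch {n : ℕ}
    (IH : ∀ m, m < n → ∀ u z1 z3 tt z : V, G.dist u z = m →
      meet hG u z1 z3 = u → z1 ∈ gInterval G u tt → z3 ∈ gInterval G u tt →
      z ∈ gInterval G u (med hG z1 z3 tt) →
      G.dist u z = G.dist u (meet hG u z z1) + G.dist u (meet hG u z z3))
    {u z1 z3 tt z t : V}
    (hdz : G.dist u z = n)
    (h13 : meet hG u z1 z3 = u) (hz1 : z1 ∈ gInterval G u tt) (hz3 : z3 ∈ gInterval G u tt)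
    (hz : z ∈ gInterval G u (med hG z1 z3 tt))
    (htz : t ∈ gInterval G u z) (htd : G.dist u t = 1) (ht1 : t ∈ gInterval G u z1) :
    G.dist u z = G.dist u (meet hG u z z1) + G.dist u (meet hG u z z3) := by
  obtain ⟨hj1, hj3, hJt, hJm⟩ := join_above hG hc hz1 hz3
  set J := med hG z1 z3 tt with hJdef
  set h1 := G.dist u z1 with hh1
  set h3 := G.dist u z3 with hh3
  have hu13 : G.dist z1 u + G.dist u z3 = G.dist z1 z3 := by
    have := meet_mem_I hG u z1 z3; rw [h13] at this; exact this
  have hcz1 : G.dist z1 u = h1 := by rw [dcomm G z1 u]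
  have hdJ : G.dist u J = h1 + h3 := by
    have := ub_height hj1 hj3 hJm; omega
  have htJz := interval_trans' hc hz htz
  have htJ : t ∈ gInterval G u J := htJz.1
  have hzt : z ∈ gInterval G t J := htJz.2
  -- t is not under z3
  have ht3 : t ∉ gInterval G u z3 := by
    intro h
    have := meet_inter hG hc ht1 h
    rw [h13] at this
    have := gI_self hc this
    rw [this] at htd
    simp [SimpleGraph.dist_self] at htd
  have hmt3 : meet hG u t z3 = u := meet_atom hG hc htd ht3
  have hu_t3 : G.dist t u + G.dist u z3 = G.dist t z3 := by
    have := meet_mem_I hG u t z3; rw [hmt3] at this; exact this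
  have hctu : G.dist t u = 1 := by rw [dcomm G t u]; exact htd
  -- z3' := t ∨ z3
  obtain ⟨p1, p2, p3, p4⟩ := join_above hG hc htJ hj3
  set z3' := med hG t z3 J with hz3'def
  have hdz3' : G.dist u z3' = h3 + 1 := by
    have := ub_height p1 p2 p4; omega
  have hz3't : z3' ∈ gInterval G t J := gI_symm (med_spec hG t z3 J).2.2
  -- (1) meet over t of z1 and z3' is t
  have hmeet_t : meet hG t z1 z3' = t := by
    have sμ1 := meet_mem_x hG t z1 z3'
    have sμ2 := meet_mem_y hG t z1 z3'
    set μ := meet hG t z1 z3' with hμdef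
    have hμ1 : μ ∈ gInterval G u z1 := (interval_trans hc ht1 sμ1).1
    have hμ3' : μ ∈ gInterval G u z3' := (interval_trans hc p1 sμ2).1
    have hν'z1 : meet hG u μ z3 ∈ gInterval G u z1 :=
      (interval_trans' hc hμ1 (meet_mem_x hG u μ z3)).1
    have hνu : meet hG u μ z3 = u := by
      have := meet_inter hG hc hν'z1 (meet_mem_y hG u μ z3)
      rw [h13] at this
      exact gI_self hc this
    have hms := mod_sum hG hc hμ3' p2
    rw [hνu] at hms
    simp only [SimpleGraph.dist_self] at hms
    have hle := gI_dist_le (join_above hG hc hμ3' p2).2.2.1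
    have hμle : G.dist u μ ≤ 1 := by omega
    -- μ ≠ u
    have ht1' : G.dist u t + G.dist t z1 = h1 := ht1
    have hμne : G.dist u μ = 1 := by
      rcases Nat.lt_or_ge (G.dist u μ) 1 with hh | hh
      · exfalso
        have : u = μ := dist_eq_zero hc (by omega)
        rw [← this] at sμ1
        have : G.dist t u + G.dist u z1 = G.dist t z1 := sμ1
        omega
      · omega
    -- μ = t
    have m1 : G.dist t μ + G.dist μ z1 = G.dist t z1 := sμ1
    have m2 : G.dist u μ + G.dist μ z1 = h1 := hμ1
    have : G.dist t μ = 0 := by omega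
    have := dist_eq_zero hc this
    rw [← this]
  -- (2) J is the join over t of z1, z3'
  have hJ' : med hG z1 z3' J = J := by
    have ν1 := meet_mem_x hG u z1 z3'
    have ν2 := meet_mem_y hG u z1 z3'
    have ν3 := meet_mem_I hG u z1 z3'
    set ν := meet hG u z1 z3' with hνdef
    have hνz3 : meet hG u ν z3 = u := by
      have hx : meet hG u ν z3 ∈ gInterval G u z1 :=
        (interval_trans' hc ν1 (meet_mem_x hG u ν z3)).1
      have := meet_inter hG hc hx (meet_mem_y hG u ν z3)
      rw [h13] at this
      exact gI_self hc this
    have hms := mod_sum hG hc ν2 p2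
    rw [hνz3] at hms
    simp only [SimpleGraph.dist_self] at hms
    have hle := gI_dist_le (join_above hG hc ν2 p2).2.2.1
    have hνle : G.dist u ν ≤ 1 := by omega
    have n1 : G.dist u ν + G.dist ν z1 = h1 := ν1
    have n2 : G.dist u ν + G.dist ν z3' = h3 + 1 := by
      have hn2 : G.dist u ν + G.dist ν z3' = G.dist u z3' := ν2
      omega
    have n3 : G.dist z1 ν + G.dist ν z3' = G.dist z1 z3' := ν3
    have cn : G.dist z1 ν = G.dist ν z1 := dcomm G z1 ν
    have tr := dtri hc z1 J z3'
    have dz1J : G.dist u z1 + G.dist z1 J = G.dist u J := hj1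
    have dz3'J : G.dist u z3' + G.dist z3' J = G.dist u J := p3
    have cJ : G.dist J z3' = G.dist z3' J := dcomm G J z3'
    have ht1' : G.dist u t + G.dist t z1 = h1 := ht1
    have hmem : J ∈ gInterval G z1 z3' := by
      rw [mem_gI]; omega
    exact med_eq hG hmem gI_right gI_left
  -- (4) apply IH at base t
  have hz1t : z1 ∈ gInterval G t J := (interval_trans' hc hj1 ht1).2
  have hdtz : G.dist u t + G.dist t z = G.dist u z := htz
  have hztmed : z ∈ gInterval G t (med hG z1 z3' J) := by rw [hJ']; exact hzt
  have IHc := IH (G.dist t z) (by omega) t z1 z3' J z rfl hmeet_t hz1t hz3't hztmed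
  -- (5) meet rebase for z1
  have hrebase : meet hG t z z1 = meet hG u z z1 := by
    have β1 := meet_mem_x hG u z z1
    have β2 := meet_mem_y hG u z z1
    have β3 := meet_mem_I hG u z z1
    have tβ : t ∈ gInterval G u (meet hG u z z1) := meet_inter hG hc htz ht1
    exact meet_eq hG (interval_trans' hc β1 tβ).2 (interval_trans' hc β2 tβ).2 β3
  have tβ : t ∈ gInterval G u (meet hG u z z1) := meet_inter hG hc htz ht1
  have dtβ : G.dist u t + G.dist t (meet hG u z z1) = G.dist u (meet hG u z z1) := tβ
  -- (6) the z3-side term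
  have γ1 := meet_mem_x hG u z z3
  have γ2 := meet_mem_y hG u z z3
  have γ3 := meet_mem_I hG u z z3
  set γ := meet hG u z z3 with hγdef
  set γ' := meet hG t z z3' with hγ'def
  have hγ'eq : G.dist t γ' = G.dist u γ := by
    -- meet(γ,t) = u
    have hmγt : meet hG u γ t = u := by
      have hmm := meet_mem_y hG u γ t
      have hle := gI_dist_le hmm
      rcases Nat.lt_or_ge (G.dist u (meet hG u γ t)) 1 with h | h
      · exact (dist_eq_zero hc (by omega)).symm
      · exfalso
        have heq : meet hG u γ t = t := eq_of_height hc hmm (by omega)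
        have htγ : t ∈ gInterval G u γ := by rw [← heq]; exact meet_mem_x hG u γ t
        exact ht3 (interval_trans' hc γ2 htγ).1
    obtain ⟨ja1, ja2, ja3, ja4⟩ := join_above hG hc γ1 htz
    set γt := med hG γ t z with hγtdef
    have hdγt : G.dist u γt = G.dist u γ + 1 := by
      have hms := mod_sum hG hc γ1 htz
      rw [← hγtdef, hmγt] at hms
      simp only [SimpleGraph.dist_self] at hms
      omega
    have hγz3' : γ ∈ gInterval G u z3' := (interval_trans' hc p2 γ2).1
    have hγtz3' : γt ∈ gInterval G u z3' := join_le hG hc γ1 htz hγz3' p1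
    have l1 : γt ∈ gInterval G t z := (interval_trans' hc ja3 ja2).2
    have l2 : γt ∈ gInterval G t z3' := (interval_trans' hc hγtz3' ja2).2
    have hlow : γt ∈ gInterval G t γ' := meet_inter hG hc l1 l2
    have hlow' : G.dist t γt ≤ G.dist t γ' := gI_dist_le hlow
    have e2 : G.dist u t + G.dist t γt = G.dist u γt := ja2
    -- upper bound
    have s1 := meet_mem_x hG t z z3'
    have s2 := meet_mem_y hG t z z3'
    rw [← hγ'def] at s1 s2
    have it := interval_trans hc htz s1
    have hγ'z3' : γ' ∈ gInterval G u z3' := (interval_trans hc p1 s2).1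
    have hωz : meet hG u γ' z3 ∈ gInterval G u z :=
      (interval_trans' hc it.1 (meet_mem_x hG u γ' z3)).1
    have hωγ : meet hG u γ' z3 ∈ gInterval G u γ :=
      meet_inter hG hc hωz (meet_mem_y hG u γ' z3)
    have hωle : G.dist u (meet hG u γ' z3) ≤ G.dist u γ := gI_dist_le hωγ
    have hms := mod_sum hG hc hγ'z3' p2
    have hle := gI_dist_le (join_above hG hc hγ'z3' p2).2.2.1
    have e3 : G.dist u t + G.dist t γ' = G.dist u γ' := it.2
    omega
  rw [hrebase] at IHc
  omega

lemma box_aux : ∀ n : ℕ, ∀ u z1 z3 tt z : V, G.dist u z = n →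
    meet hG u z1 z3 = u → z1 ∈ gInterval G u tt → z3 ∈ gInterval G u tt →
    z ∈ gInterval G u (med hG z1 z3 tt) →
    G.dist u z = G.dist u (meet hG u z z1) + G.dist u (meet hG u z z3) := by
  intro n
  induction n using Nat.strong_induction_on with
  | _ n IH =>
    intro u z1 z3 tt z hdz h13 hz1 hz3 hz
    rcases Nat.eq_zero_or_pos n with h0 | hpos
    · rw [h0] at hdz
      have huz : u = z := dist_eq_zero hc hdz
      rw [← huz, meet_base, meet_base]
      simp [SimpleGraph.dist_self]
    · have hne : u ≠ z := by
        intro h; rw [h, SimpleGraph.dist_self] at hdz; omega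
      obtain ⟨t, htd, htz⟩ := exists_step hc hne
      have htJ := (interval_trans' hc hz htz).1
      rcases atom_split hG hc h13 hz1 hz3 htJ htd with h | h
      · exact box_branch hG hc IH hdz h13 hz1 hz3 hz htz htd h
      · have h13' : meet hG u z3 z1 = u := (meet_comm hG u z3 z1).trans h13
        have hz' : z ∈ gInterval G u (med hG z3 z1 tt) := by
          rw [med_swap12 hG hc z3 z1 tt]; exact hz
        have := box_branch hG hc IH hdz h13' hz3 hz1 hz' htz htd h
        omega

/-- distributivity / box lemma: if `z1 ∧ z3 = u` and `z ≤ z1 ∨ z3` then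
`ht z = ht (z∧z1) + ht (z∧z3)`. -/
lemma box {u z1 z3 tt z : V}
    (h13 : meet hG u z1 z3 = u) (hz1 : z1 ∈ gInterval G u tt) (hz3 : z3 ∈ gInterval G u tt)
    (hz : z ∈ gInterval G u (med hG z1 z3 tt)) :
    G.dist u z = G.dist u (meet hG u z z1) + G.dist u (meet hG u z z3) :=
  box_aux hG hc (G.dist u z) u z1 z3 tt z rfl h13 hz1 hz3 hz

/-- membership form of the box lemma: `z ∈ I(z1,z3)`. -/
lemma box_mem {u z1 z3 tt z : V}
    (h13 : meet hG u z1 z3 = u) (hz1 : z1 ∈ gInterval G u tt) (hz3 : z3 ∈ gInterval G u tt)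
    (hz : z ∈ gInterval G u (med hG z1 z3 tt)) :
    z ∈ gInterval G z1 z3 := by
  have hbox := box hG hc h13 hz1 hz3 hz
  have hu13 : G.dist z1 u + G.dist u z3 = G.dist z1 z3 := by
    have := meet_mem_I hG u z1 z3; rw [h13] at this; exact this
  have β1 : G.dist u (meet hG u z z1) + G.dist (meet hG u z z1) z = G.dist u z :=
    meet_mem_x hG u z z1
  have β2 : G.dist u (meet hG u z z1) + G.dist (meet hG u z z1) z1 = G.dist u z1 :=
    meet_mem_y hG u z z1
  have β3 : G.dist z (meet hG u z z1) + G.dist (meet hG u z z1) z1 = G.dist z z1 :=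
    meet_mem_I hG u z z1
  have γ1 : G.dist u (meet hG u z z3) + G.dist (meet hG u z z3) z = G.dist u z :=
    meet_mem_x hG u z z3
  have γ2 : G.dist u (meet hG u z z3) + G.dist (meet hG u z z3) z3 = G.dist u z3 :=
    meet_mem_y hG u z z3
  have γ3 : G.dist z (meet hG u z z3) + G.dist (meet hG u z z3) z3 = G.dist z z3 :=
    meet_mem_I hG u z z3
  have c1 : G.dist z1 u = G.dist u z1 := dcomm G z1 u
  have c2 : G.dist z1 z = G.dist z z1 := dcomm G z1 z
  have c3 : G.dist z (meet hG u z z1) = G.dist (meet hG u z z1) z := dcomm G z _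
  have c4 : G.dist z (meet hG u z z3) = G.dist (meet hG u z z3) z := dcomm G z _
  rw [mem_gI]
  omega

end Box

end QG
namespace QG

open SimpleGraph

variable {V : Type*} {G : SimpleGraph V}

section Gates

variable (hc : G.Connected)
include hc

lemma gate_unique {S : Set V} {v g g' : V} (h : IsGate G S v g) (h' : IsGate G S v g') :
    g = g' := by
  have e1 := h.2 g' h'.1
  have e2 := h'.2 g h.1
  have c := dcomm G g g'
  exact dist_eq_zero hc (by omega : G.dist g g' = 0)

lemma gate_mem_I {S : Set V} {v g w : V} (h : IsGate G S v g) (hw : w ∈ S) :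
    g ∈ gInterval G v w := mem_gI.2 (h.2 w hw).symm

/-- gated sets are convex. -/
lemma gated_convex {S : Set V} (hS : Gated G S) {a b w : V} (ha : a ∈ S) (hb : b ∈ S)
    (hw : w ∈ gInterval G a b) : w ∈ S := by
  obtain ⟨g, hg⟩ := hS w
  have e1 := hg.2 a ha
  have e2 := hg.2 b hb
  rw [mem_gI] at hw
  have t := dtri hc a g b
  have c1 := dcomm G a w
  have c2 := dcomm G a g
  have : G.dist w g = 0 := by omega
  have hwg := dist_eq_zero hc this
  rw [hwg]
  exact hg.1

/-- in a median graph, nonempty convex sets are gated. -/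
lemma convex_gated (hG : MedianGraph G) {S : Set V}
    (hconv : ∀ a ∈ S, ∀ b ∈ S, ∀ w ∈ gInterval G a b, w ∈ S) (hne : S.Nonempty) :
    Gated G S := by
  intro v
  have hDne : {n : ℕ | ∃ w ∈ S, G.dist v w = n}.Nonempty := by
    obtain ⟨w, hw⟩ := hne
    exact ⟨G.dist v w, w, hw, rfl⟩
  obtain ⟨g, hgS, hgd⟩ := Nat.sInf_mem hDne
  refine ⟨g, hgS, ?_⟩
  intro w hw
  have hmin : ∀ w' ∈ S, G.dist v g ≤ G.dist v w' := by
    intro w' hw'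
    rw [hgd]
    exact Nat.sInf_le ⟨w', hw', rfl⟩
  set m := meet hG v g w with hm
  have hmS : m ∈ S := hconv g hgS w hw m (meet_mem_I hG v g w)
  have h1 : m ∈ gInterval G v g := meet_mem_x hG v g w
  have h2 : m ∈ gInterval G v w := meet_mem_y hG v g w
  have hle : G.dist v g ≤ G.dist v m := hmin m hmS
  have : m = g := eq_of_height hc h1 (by have := gI_dist_le h1; omega)
  rw [← this]
  exact h2.symm

end Gates

end QG
namespace QG

open SimpleGraph

variable {V : Type*} {G : SimpleGraph V}

noncomputable def cubeF (v p q s wpq wps wqs z : V) (A : Finset (Fin 3)) : V :=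
  if A = ∅ then v else if A = {0} then p else if A = {1} then q else if A = {2} then s
  else if A = ({0,1} : Finset (Fin 3)) then wpq else if A = ({0,2} : Finset (Fin 3)) then wps
  else if A = ({1,2} : Finset (Fin 3)) then wqs else z

lemma cubeF_e0 (v p q s wpq wps wqs z : V) : cubeF v p q s wpq wps wqs z (∅ : Finset (Fin 3)) = v := by
  unfold cubeF
  rw [if_pos rfl]

lemma cubeF_e1 (v p q s wpq wps wqs z : V) : cubeF v p q s wpq wps wqs z ({0} : Finset (Fin 3)) = p := by
  unfold cubeF
  rw [if_neg (show ¬ (({0} : Finset (Fin 3)) = ∅) by decide), if_pos rfl]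

lemma cubeF_e2 (v p q s wpq wps wqs z : V) : cubeF v p q s wpq wps wqs z ({1} : Finset (Fin 3)) = q := by
  unfold cubeF
  rw [if_neg (show ¬ (({1} : Finset (Fin 3)) = ∅) by decide), if_neg (show ¬ (({1} : Finset (Fin 3)) = {0}) by decide), if_pos rfl]

lemma cubeF_e3 (v p q s wpq wps wqs z : V) : cubeF v p q s wpq wps wqs z ({2} : Finset (Fin 3)) = s := by
  unfold cubeF
  rw [if_neg (show ¬ (({2} : Finset (Fin 3)) = ∅) by decide), if_neg (show ¬ (({2} : Finset (Fin 3)) = {0}) by decide), if_neg (show ¬ (({2} : Finset (Fin 3)) = {1}) by decide), if_pos rfl]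

lemma cubeF_e4 (v p q s wpq wps wqs z : V) : cubeF v p q s wpq wps wqs z ({0,1} : Finset (Fin 3)) = wpq := by
  unfold cubeF
  rw [if_neg (show ¬ (({0,1} : Finset (Fin 3)) = ∅) by decide), if_neg (show ¬ (({0,1} : Finset (Fin 3)) = {0}) by decide), if_neg (show ¬ (({0,1} : Finset (Fin 3)) = {1}) by decide), if_neg (show ¬ (({0,1} : Finset (Fin 3)) = {2}) by decide), if_pos rfl]

lemma cubeF_e5 (v p q s wpq wps wqs z : V) : cubeF v p q s wpq wps wqs z ({0,2} : Finset (Fin 3)) = wps := by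
  unfold cubeF
  rw [if_neg (show ¬ (({0,2} : Finset (Fin 3)) = ∅) by decide), if_neg (show ¬ (({0,2} : Finset (Fin 3)) = {0}) by decide), if_neg (show ¬ (({0,2} : Finset (Fin 3)) = {1}) by decide), if_neg (show ¬ (({0,2} : Finset (Fin 3)) = {2}) by decide), if_neg (show ¬ (({0,2} : Finset (Fin 3)) = ({0,1} : Finset (Fin 3))) by decide), if_pos rfl]

lemma cubeF_e6 (v p q s wpq wps wqs z : V) : cubeF v p q s wpq wps wqs z ({1,2} : Finset (Fin 3)) = wqs := by
  unfold cubeF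
  rw [if_neg (show ¬ (({1,2} : Finset (Fin 3)) = ∅) by decide), if_neg (show ¬ (({1,2} : Finset (Fin 3)) = {0}) by decide), if_neg (show ¬ (({1,2} : Finset (Fin 3)) = {1}) by decide), if_neg (show ¬ (({1,2} : Finset (Fin 3)) = {2}) by decide), if_neg (show ¬ (({1,2} : Finset (Fin 3)) = ({0,1} : Finset (Fin 3))) by decide), if_neg (show ¬ (({1,2} : Finset (Fin 3)) = ({0,2} : Finset (Fin 3))) by decide), if_pos rfl]

lemma cubeF_e7 (v p q s wpq wps wqs z : V) : cubeF v p q s wpq wps wqs z ({0,1,2} : Finset (Fin 3)) = z := by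
  unfold cubeF
  rw [if_neg (show ¬ (({0,1,2} : Finset (Fin 3)) = ∅) by decide), if_neg (show ¬ (({0,1,2} : Finset (Fin 3)) = {0}) by decide), if_neg (show ¬ (({0,1,2} : Finset (Fin 3)) = {1}) by decide), if_neg (show ¬ (({0,1,2} : Finset (Fin 3)) = {2}) by decide), if_neg (show ¬ (({0,1,2} : Finset (Fin 3)) = ({0,1} : Finset (Fin 3))) by decide), if_neg (show ¬ (({0,1,2} : Finset (Fin 3)) = ({0,2} : Finset (Fin 3))) by decide), if_neg (show ¬ (({0,1,2} : Finset (Fin 3)) = ({1,2} : Finset (Fin 3))) by decide)]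

lemma build_cube {v p q s wpq wps wqs z : V}
    (ha0 : G.Adj v p) (ha1 : G.Adj v q) (ha2 : G.Adj v s) (ha3 : G.Adj p wpq) (ha4 : G.Adj q wpq) (ha5 : G.Adj p wps) (ha6 : G.Adj s wps) (ha7 : G.Adj q wqs) (ha8 : G.Adj s wqs) (ha9 : G.Adj wpq z) (ha10 : G.Adj wps z) (ha11 : G.Adj wqs z) (hn0 : ¬ G.Adj v wpq) (hn1 : ¬ G.Adj v wps) (hn2 : ¬ G.Adj v wqs) (hn3 : ¬ G.Adj v z) (hn4 : ¬ G.Adj p q) (hn5 : ¬ G.Adj p s) (hn6 : ¬ G.Adj q s) (hn7 : ¬ G.Adj p wqs) (hn8 : ¬ G.Adj q wps) (hn9 : ¬ G.Adj s wpq) (hn10 : ¬ G.Adj p z) (hn11 : ¬ G.Adj q z) (hn12 : ¬ G.Adj s z) (hn13 : ¬ G.Adj wpq wps) (hn14 : ¬ G.Adj wpq wqs) (hn15 : ¬ G.Adj wps wqs) (hd0 : v ≠ wpq) (hd1 : v ≠ wps) (hd2 : v ≠ wqs) (hd3 : v ≠ z) (hd4 : p ≠ q) (hd5 : p ≠ s)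 (hd6 : q ≠ s) (hd7 : p ≠ wqs) (hd8 : q ≠ wps) (hd9 : s ≠ wpq) (hd10 : p ≠ z) (hd11 : q ≠ z) (hd12 : s ≠ z) (hd13 : wpq ≠ wps) (hd14 : wpq ≠ wqs) (hd15 : wps ≠ wqs) :
    HasInducedCube G 3 := by
  have ha0' : G.Adj p v := ha0.symm
  have ha1' : G.Adj q v := ha1.symm
  have ha2' : G.Adj s v := ha2.symm
  have ha3' : G.Adj wpq p := ha3.symm
  have ha4' : G.Adj wpq q := ha4.symm
  have ha5' : G.Adj wps p := ha5.symm
  have ha6' : G.Adj wps s := ha6.symm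
  have ha7' : G.Adj wqs q := ha7.symm
  have ha8' : G.Adj wqs s := ha8.symm
  have ha9' : G.Adj z wpq := ha9.symm
  have ha10' : G.Adj z wps := ha10.symm
  have ha11' : G.Adj z wqs := ha11.symm
  have hn0' : ¬ G.Adj wpq v := fun h => hn0 h.symm
  have hn1' : ¬ G.Adj wps v := fun h => hn1 h.symm
  have hn2' : ¬ G.Adj wqs v := fun h => hn2 h.symm
  have hn3' : ¬ G.Adj z v := fun h => hn3 h.symm
  have hn4' : ¬ G.Adj q p := fun h => hn4 h.symm
  have hn5' : ¬ G.Adj s p := fun h => hn5 h.symm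
  have hn6' : ¬ G.Adj s q := fun h => hn6 h.symm
  have hn7' : ¬ G.Adj wqs p := fun h => hn7 h.symm
  have hn8' : ¬ G.Adj wps q := fun h => hn8 h.symm
  have hn9' : ¬ G.Adj wpq s := fun h => hn9 h.symm
  have hn10' : ¬ G.Adj z p := fun h => hn10 h.symm
  have hn11' : ¬ G.Adj z q := fun h => hn11 h.symm
  have hn12' : ¬ G.Adj z s := fun h => hn12 h.symm
  have hn13' : ¬ G.Adj wps wpq := fun h => hn13 h.symm
  have hn14' : ¬ G.Adj wqs wpq := fun h => hn14 h.symm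
  have hn15' : ¬ G.Adj wqs wps := fun h => hn15 h.symm
  have he0 : v ≠ p := ha0.ne
  have he0' : p ≠ v := ha0.ne'
  have he1 : v ≠ q := ha1.ne
  have he1' : q ≠ v := ha1.ne'
  have he2 : v ≠ s := ha2.ne
  have he2' : s ≠ v := ha2.ne'
  have he3 : p ≠ wpq := ha3.ne
  have he3' : wpq ≠ p := ha3.ne'
  have he4 : q ≠ wpq := ha4.ne
  have he4' : wpq ≠ q := ha4.ne'
  have he5 : p ≠ wps := ha5.ne
  have he5' : wps ≠ p := ha5.ne'
  have he6 : s ≠ wps := ha6.ne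
  have he6' : wps ≠ s := ha6.ne'
  have he7 : q ≠ wqs := ha7.ne
  have he7' : wqs ≠ q := ha7.ne'
  have he8 : s ≠ wqs := ha8.ne
  have he8' : wqs ≠ s := ha8.ne'
  have he9 : wpq ≠ z := ha9.ne
  have he9' : z ≠ wpq := ha9.ne'
  have he10 : wps ≠ z := ha10.ne
  have he10' : z ≠ wps := ha10.ne'
  have he11 : wqs ≠ z := ha11.ne
  have he11' : z ≠ wqs := ha11.ne'
  have hd0' : wpq ≠ v := hd0.symm
  have hd1' : wps ≠ v := hd1.symm
  have hd2' : wqs ≠ v := hd2.symm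
  have hd3' : z ≠ v := hd3.symm
  have hd4' : q ≠ p := hd4.symm
  have hd5' : s ≠ p := hd5.symm
  have hd6' : s ≠ q := hd6.symm
  have hd7' : wqs ≠ p := hd7.symm
  have hd8' : wps ≠ q := hd8.symm
  have hd9' : wpq ≠ s := hd9.symm
  have hd10' : z ≠ p := hd10.symm
  have hd11' : z ≠ q := hd11.symm
  have hd12' : z ≠ s := hd12.symm
  have hd13' : wps ≠ wpq := hd13.symm
  have hd14' : wqs ≠ wpq := hd14.symm
  have hd15' : wqs ≠ wps := hd15.symm
  have hi0 : ¬ G.Adj v v := G.irrefl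
  have hi1 : ¬ G.Adj p p := G.irrefl
  have hi2 : ¬ G.Adj q q := G.irrefl
  have hi3 : ¬ G.Adj s s := G.irrefl
  have hi4 : ¬ G.Adj wpq wpq := G.irrefl
  have hi5 : ¬ G.Adj wps wps := G.irrefl
  have hi6 : ¬ G.Adj wqs wqs := G.irrefl
  have hi7 : ¬ G.Adj z z := G.irrefl
  have hfin : ∀ A : Finset (Fin 3), A = ∅ ∨ A = {0} ∨ A = {1} ∨ A = {2} ∨
      A = ({0,1} : Finset (Fin 3)) ∨ A = ({0,2} : Finset (Fin 3)) ∨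
      A = ({1,2} : Finset (Fin 3)) ∨ A = ({0,1,2} : Finset (Fin 3)) := by decide
  refine ⟨cubeF v p q s wpq wps wqs z, ?_, fun A => Set.mem_univ _, ?_⟩
  · intro A B hAB
    rcases hfin A with rfl|rfl|rfl|rfl|rfl|rfl|rfl|rfl <;>
      rcases hfin B with rfl|rfl|rfl|rfl|rfl|rfl|rfl|rfl <;>
      simp only [cubeF_e0, cubeF_e1, cubeF_e2, cubeF_e3, cubeF_e4, cubeF_e5, cubeF_e6, cubeF_e7] at hAB <;>
      first
      | rfl
      | exact absurd hAB (by assumption)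
  · intro A B
    rcases hfin A with rfl|rfl|rfl|rfl|rfl|rfl|rfl|rfl <;>
      rcases hfin B with rfl|rfl|rfl|rfl|rfl|rfl|rfl|rfl <;>
      simp only [cubeF_e0, cubeF_e1, cubeF_e2, cubeF_e3, cubeF_e4, cubeF_e5, cubeF_e6, cubeF_e7] <;>
      first
      | exact iff_of_true (by assumption) (by decide)
      | exact iff_of_false (by assumption) (by decide)

end QG
namespace QG

open SimpleGraph

variable {V : Type*} {G : SimpleGraph V}

section CubeSq

variable (hG : MedianGraph G) (hc : G.Connected)
include hG hc

omit hG in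
lemma dist_two {x y : V} (hne : x ≠ y) (hnadj : ¬ G.Adj x y) (hle : G.dist x y ≤ 2) :
    G.dist x y = 2 := by
  have h0 : G.dist x y ≠ 0 := fun h => hne (dist_eq_zero hc h)
  have h1 : G.dist x y ≠ 1 := fun h => hnadj (dist_eq_one_iff_adj.1 h)
  omega

/-- a vertex with three pairwise-squared neighbours yields an induced 3-cube. -/
lemma cube_of_squares (hcf : CubeFree G) {v p q s wpq wps wqs : V}
    (hp : G.dist v p = 1) (hq : G.dist v q = 1) (hs : G.dist v s = 1)
    (hpq : p ≠ q) (hps : p ≠ s) (hqs : q ≠ s)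
    (h1p : G.dist p wpq = 1) (h1q : G.dist q wpq = 1) (h1v : wpq ≠ v)
    (h2p : G.dist p wps = 1) (h2s : G.dist s wps = 1) (h2v : wps ≠ v)
    (h3q : G.dist q wqs = 1) (h3s : G.dist s wqs = 1) (h3v : wqs ≠ v) : False := by
  -- adjacency versions
  have aVP : G.Adj v p := dist_eq_one_iff_adj.1 hp
  have aVQ : G.Adj v q := dist_eq_one_iff_adj.1 hq
  have aVS : G.Adj v s := dist_eq_one_iff_adj.1 hs
  have aPW1 : G.Adj p wpq := dist_eq_one_iff_adj.1 h1p
  have aQW1 : G.Adj q wpq := dist_eq_one_iff_adj.1 h1q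
  have aPW2 : G.Adj p wps := dist_eq_one_iff_adj.1 h2p
  have aSW2 : G.Adj s wps := dist_eq_one_iff_adj.1 h2s
  have aQW3 : G.Adj q wqs := dist_eq_one_iff_adj.1 h3q
  have aSW3 : G.Adj s wqs := dist_eq_one_iff_adj.1 h3s
  -- comm facts
  have cpv : G.dist p v = 1 := (dcomm G p v).trans hp
  have cqv : G.dist q v = 1 := (dcomm G q v).trans hq
  have csv : G.dist s v = 1 := (dcomm G s v).trans hs
  have cw1p : G.dist wpq p = 1 := (dcomm G wpq p).trans h1p
  have cw1q : G.dist wpq q = 1 := (dcomm G wpq q).trans h1q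
  have cw2p : G.dist wps p = 1 := (dcomm G wps p).trans h2p
  have cw2s : G.dist wps s = 1 := (dcomm G wps s).trans h2s
  have cw3q : G.dist wqs q = 1 := (dcomm G wqs q).trans h3q
  have cw3s : G.dist wqs s = 1 := (dcomm G wqs s).trans h3s
  -- p,q,s pairwise distance 2
  have nPQ : ¬ G.Adj p q := fun h => (adj_dist_ne hG hc h v) (by rw [hp, hq])
  have nPS : ¬ G.Adj p s := fun h => (adj_dist_ne hG hc h v) (by rw [hp, hs])
  have nQS : ¬ G.Adj q s := fun h => (adj_dist_ne hG hc h v) (by rw [hq, hs])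
  have dpq : G.dist p q = 2 := dist_two hc hpq nPQ (le_trans (dtri hc p v q) (by omega))
  have dps : G.dist p s = 2 := dist_two hc hps nPS (le_trans (dtri hc p v s) (by omega))
  have dqs : G.dist q s = 2 := dist_two hc hqs nQS (le_trans (dtri hc q v s) (by omega))
  -- v is at distance 2 from the w's
  have nVW1 : ¬ G.Adj v wpq := fun h => no_triangle hG hc aVP aPW1 h
  have nVW2 : ¬ G.Adj v wps := fun h => no_triangle hG hc aVP aPW2 h
  have nVW3 : ¬ G.Adj v wqs := fun h => no_triangle hG hc aVQ aQW3 h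
  have dvw1 : G.dist v wpq = 2 :=
    dist_two hc (Ne.symm h1v) nVW1 (le_trans (dtri hc v p wpq) (by omega))
  have dvw2 : G.dist v wps = 2 :=
    dist_two hc (Ne.symm h2v) nVW2 (le_trans (dtri hc v p wps) (by omega))
  have dvw3 : G.dist v wqs = 2 :=
    dist_two hc (Ne.symm h3v) nVW3 (le_trans (dtri hc v q wqs) (by omega))
  have csp : G.dist s p = 2 := (dcomm G s p).trans dps
  have cqp : G.dist q p = 2 := (dcomm G q p).trans dpq
  have csq : G.dist s q = 2 := (dcomm G s q).trans dqs
  have cw1v : G.dist wpq v = 2 := (dcomm G wpq v).trans dvw1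
  have cw2v : G.dist wps v = 2 := (dcomm G wps v).trans dvw2
  have cw3v : G.dist wqs v = 2 := (dcomm G wqs v).trans dvw3
  -- the w's are pairwise distinct
  have hw12 : wpq ≠ wps := by
    intro h
    rw [← h] at h2s cw2s
    have : v = wpq := by
      refine med_unique hG (x := p) (y := q) (z := s) ?_ ?_ ?_ ?_ ?_ ?_ <;>
        · rw [mem_gI]; omega
    exact h1v this.symm
  have hw13 : wpq ≠ wqs := by
    intro h
    rw [← h] at h3s cw3s
    have : v = wpq := by
      refine med_unique hG (x := p) (y := q) (z := s) ?_ ?_ ?_ ?_ ?_ ?_ <;>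
        · rw [mem_gI]; omega
    exact h1v this.symm
  have hw23 : wps ≠ wqs := by
    intro h
    rw [← h] at h3q cw3q
    have : v = wps := by
      refine med_unique hG (x := p) (y := q) (z := s) ?_ ?_ ?_ ?_ ?_ ?_ <;>
        · rw [mem_gI]; omega
    exact h2v this.symm
  -- pairwise distance 2 between the w's
  have nW12 : ¬ G.Adj wpq wps := fun h => (adj_dist_ne hG hc h v) (by rw [dvw1, dvw2])
  have nW13 : ¬ G.Adj wpq wqs := fun h => (adj_dist_ne hG hc h v) (by rw [dvw1, dvw3])
  have nW23 : ¬ G.Adj wps wqs := fun h => (adj_dist_ne hG hc h v) (by rw [dvw2, dvw3])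
  have dw12 : G.dist wpq wps = 2 :=
    dist_two hc hw12 nW12 (le_trans (dtri hc wpq p wps) (by omega))
  have dw13 : G.dist wpq wqs = 2 :=
    dist_two hc hw13 nW13 (le_trans (dtri hc wpq q wqs) (by omega))
  have dw23 : G.dist wps wqs = 2 :=
    dist_two hc hw23 nW23 (le_trans (dtri hc wps s wqs) (by omega))
  -- cross non-adjacencies
  have nPW3 : ¬ G.Adj p wqs := by
    intro hadj
    have hd : G.dist p wqs = 1 := dist_eq_one_iff_adj.2 hadj
    have cw3p : G.dist wqs p = 1 := (dcomm G wqs p).trans hd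
    apply hpq
    refine med_unique hG (x := v) (y := wpq) (z := wqs) ?_ ?_ ?_ ?_ ?_ ?_ <;>
      · rw [mem_gI]; omega
  have nQW2 : ¬ G.Adj q wps := by
    intro hadj
    have hd : G.dist q wps = 1 := dist_eq_one_iff_adj.2 hadj
    have cw2q : G.dist wps q = 1 := (dcomm G wps q).trans hd
    apply hpq
    refine med_unique hG (x := v) (y := wpq) (z := wps) ?_ ?_ ?_ ?_ ?_ ?_ <;>
      · rw [mem_gI]; omega
  have nSW1 : ¬ G.Adj s wpq := by
    intro hadj
    have hd : G.dist s wpq = 1 := dist_eq_one_iff_adj.2 hadj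
    have cw1s : G.dist wpq s = 1 := (dcomm G wpq s).trans hd
    apply hps
    refine med_unique hG (x := v) (y := wpq) (z := wps) ?_ ?_ ?_ ?_ ?_ ?_ <;>
      · rw [mem_gI]; omega
  -- the top vertex z
  obtain ⟨m1, m2, m3⟩ := med_spec hG wpq wps wqs
  set z := med hG wpq wps wqs with hzdef
  rw [mem_gI] at m1 m2 m3
  have cz1 : G.dist z wpq = G.dist wpq z := dcomm G z wpq
  have cz2 : G.dist z wps = G.dist wps z := dcomm G z wps
  have cz3 : G.dist z wqs = G.dist wqs z := dcomm G z wqs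
  rw [dw12] at m1; rw [dw23] at m2
  have cw13 : G.dist wqs wpq = 2 := (dcomm G wqs wpq).trans dw13
  have m3' : G.dist wqs z + G.dist z wpq = 2 := by rw [cw13] at m3; omega
  have dzw1 : G.dist z wpq = 1 := by omega
  have dzw2 : G.dist z wps = 1 := by omega
  have dzw3 : G.dist z wqs = 1 := by omega
  have aZW1 : G.Adj z wpq := dist_eq_one_iff_adj.1 dzw1
  have aZW2 : G.Adj z wps := dist_eq_one_iff_adj.1 dzw2
  have aZW3 : G.Adj z wqs := dist_eq_one_iff_adj.1 dzw3
  -- z is distinct from v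
  have hzv : z ≠ v := by
    intro h
    rw [h] at dzw1
    rw [dvw1] at dzw1
    omega
  -- v not adjacent to z
  have nVZ : ¬ G.Adj v z := by
    intro hadj
    have hvz : G.dist v z = 1 := dist_eq_one_iff_adj.2 hadj
    have czv : G.dist z v = 1 := (dcomm G z v).trans hvz
    have hpz : p = z := by
      refine med_unique hG (x := v) (y := wpq) (z := wps) ?_ ?_ ?_ ?_ ?_ ?_ <;>
        · rw [mem_gI]; omega
    rw [hpz] at nPW3
    exact nPW3 aZW3
  -- z not adjacent to p, q, s
  have nPZ : ¬ G.Adj p z := fun h => no_triangle hG hc h aZW1 aPW1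
  have nQZ : ¬ G.Adj q z := fun h => no_triangle hG hc h aZW1 aQW1
  have nSZ : ¬ G.Adj s z := fun h => no_triangle hG hc h aZW2 aSW2
  -- distinctness
  have dVP : v ≠ p := aVP.ne
  have dPZ : p ≠ z := by
    intro h; rw [h] at nPW3; exact nPW3 aZW3
  have dQZ : q ≠ z := by
    intro h; rw [h] at nQW2; exact nQW2 aZW2
  have dSZ : s ≠ z := by
    intro h; rw [h] at nSW1; exact nSW1 aZW1
  have dPW1 : p ≠ wpq := by intro h; rw [h] at hp; omega
  have dPW2 : p ≠ wps := by intro h; rw [h] at hp; omega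
  have dPW3 : p ≠ wqs := by intro h; rw [h] at hp; omega
  have dQW1 : q ≠ wpq := by intro h; rw [h] at hq; omega
  have dQW2 : q ≠ wps := by intro h; rw [h] at hq; omega
  have dQW3 : q ≠ wqs := by intro h; rw [h] at hq; omega
  have dSW1 : s ≠ wpq := by intro h; rw [h] at hs; omega
  have dSW2 : s ≠ wps := by intro h; rw [h] at hs; omega
  have dSW3 : s ≠ wqs := by intro h; rw [h] at hs; omega
  have dVQ : v ≠ q := aVQ.ne
  have dVS : v ≠ s := aVS.ne
  have dVZ : v ≠ z := hzv.symm
  have dW1Z : wpq ≠ z := aZW1.ne'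
  have dW2Z : wps ≠ z := aZW2.ne'
  have dW3Z : wqs ≠ z := aZW3.ne'
  exact hcf (build_cube aVP aVQ aVS aPW1 aQW1 aPW2 aSW2 aQW3 aSW3
    (aZW1.symm) (aZW2.symm) (aZW3.symm)
    nVW1 nVW2 nVW3 nVZ nPQ nPS nQS nPW3 nQW2 nSW1 nPZ nQZ nSZ nW12 nW13 nW23
    (Ne.symm h1v) (Ne.symm h2v) (Ne.symm h3v) dVZ hpq hps hqs dPW3 dQW2 dSW1
    dPZ dQZ dSZ hw12 hw13 hw23)

end CubeSq

end QG
namespace QG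

open SimpleGraph

variable {V : Type*} {G : SimpleGraph V}

section Tree

variable {T : G.Subgraph} {r : V}

/-- the branch of `x`: vertices on the tree path from `x` to the root `r`. -/
def branch (T : G.Subgraph) (r : V) (hr : r ∈ T.verts) (x : V) (hx : x ∈ T.verts) : Set V :=
  {w : V | ∃ hw : w ∈ T.verts,
    T.coe.dist ⟨x, hx⟩ ⟨w, hw⟩ + T.coe.dist ⟨w, hw⟩ ⟨r, hr⟩ =
      T.coe.dist ⟨x, hx⟩ ⟨r, hr⟩}

variable (hr : r ∈ T.verts)

lemma branch_subset {x : V} (hx : x ∈ T.verts) : branch T r hr x hx ⊆ T.verts :=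
  fun _ hw => hw.1

lemma self_mem_branch {x : V} (hx : x ∈ T.verts) : x ∈ branch T r hr x hx :=
  ⟨hx, by simp [SimpleGraph.dist_self]⟩

lemma root_mem_branch {x : V} (hx : x ∈ T.verts) : r ∈ branch T r hr x hx :=
  ⟨hr, by simp [SimpleGraph.dist_self]⟩

variable (hT : T.coe.IsTree)
include hT

/-- step towards the root inside a branch. -/
lemma branch_step {x w : V} (hx : x ∈ T.verts) (hw : w ∈ branch T r hr x hx)
    (hxw : x ≠ w) :
    ∃ (x' : V) (hx' : x' ∈ T.verts), T.coe.Adj ⟨x, hx⟩ ⟨x', hx'⟩ ∧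
      T.coe.dist ⟨x', hx'⟩ ⟨r, hr⟩ + 1 = T.coe.dist ⟨x, hx⟩ ⟨r, hr⟩ ∧
      T.coe.dist ⟨x', hx'⟩ ⟨w, hw.1⟩ + 1 = T.coe.dist ⟨x, hx⟩ ⟨w, hw.1⟩ ∧
      w ∈ branch T r hr x' hx' ∧ x ∉ branch T r hr x' hx' := by
  obtain ⟨hwT, hweq⟩ := hw
  have hTc := hT.isConnected
  obtain ⟨p, hp⟩ := hTc.exists_walk_length_eq_dist ⟨x, hx⟩ ⟨w, hwT⟩
  obtain ⟨q, hq⟩ := hTc.exists_walk_length_eq_dist ⟨w, hwT⟩ ⟨r, hr⟩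
  have hdxw : 0 < T.coe.dist ⟨x, hx⟩ ⟨w, hwT⟩ :=
    dist_pos hTc (fun h => hxw (congrArg Subtype.val h))
  cases p with
  | nil => simp at hp; omega
  | cons a rest =>
    rename_i v'
    obtain ⟨x', hx'⟩ := v'
    refine ⟨x', hx', a, ?_⟩
    simp only [SimpleGraph.Walk.length_cons] at hp
    have hadj1 : T.coe.dist (⟨x, hx⟩ : T.verts) ⟨x', hx'⟩ = 1 := dist_eq_one_iff_adj.2 a
    have hrest : T.coe.dist (⟨x', hx'⟩ : T.verts) ⟨w, hwT⟩ ≤ rest.length :=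
      SimpleGraph.dist_le rest
    have ht1 := dtri hTc (⟨x, hx⟩ : T.verts) ⟨x', hx'⟩ ⟨w, hwT⟩
    have hdw : T.coe.dist (⟨x', hx'⟩ : T.verts) ⟨w, hwT⟩ + 1 =
        T.coe.dist ⟨x, hx⟩ ⟨w, hwT⟩ := by omega
    have hrle : T.coe.dist (⟨x', hx'⟩ : T.verts) ⟨r, hr⟩ ≤ rest.length + q.length := by
      have := SimpleGraph.dist_le (rest.append q)
      simpa using this
    have ht2 := dtri hTc (⟨x, hx⟩ : T.verts) ⟨x', hx'⟩ ⟨r, hr⟩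
    have hdr : T.coe.dist (⟨x', hx'⟩ : T.verts) ⟨r, hr⟩ + 1 =
        T.coe.dist ⟨x, hx⟩ ⟨r, hr⟩ := by omega
    refine ⟨hdr, hdw, ⟨hwT, by omega⟩, ?_⟩
    rintro ⟨hxT, hxeq⟩
    have hne : (⟨x', hx'⟩ : T.verts) ≠ ⟨x, hx⟩ := fun h => (T.coe.irrefl (h ▸ a))
    have := dist_pos hTc hne
    have hc2 : T.coe.dist (⟨x', hx'⟩ : T.verts) ⟨x, hx⟩ =
        T.coe.dist ⟨x, hx⟩ ⟨x', hx'⟩ := dcomm _ _ _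
    omega

/-- on a branch, `G`-distance from the branch root equals `T`-distance. -/
lemma branch_dist_eq (hc : G.Connected)
    (hbranches : ∀ (x : V) (hx : x ∈ T.verts), Gated G (branch T r hr x hx)) :
    ∀ (n : ℕ) (x : V) (hx : x ∈ T.verts) (w : V) (hw : w ∈ branch T r hr x hx),
      T.coe.dist ⟨x, hx⟩ ⟨w, hw.1⟩ = n → G.dist x w = n := by
  intro n
  induction n using Nat.strong_induction_on with
  | _ n IH =>
    intro x hx w hw hdn
    have hTc := hT.isConnected
    rcases Nat.eq_zero_or_pos n with h0 | hpos
    · rw [h0] at hdn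
      have := dist_eq_zero hTc hdn
      have hxw : x = w := congrArg Subtype.val this
      rw [← hxw, h0, SimpleGraph.dist_self]
    · have hxw : x ≠ w := by
        intro h
        subst h
        rw [show (⟨x, hw.1⟩ : T.verts) = ⟨x, hx⟩ from rfl] at hdn
        rw [SimpleGraph.dist_self] at hdn
        omega
      obtain ⟨x', hx', hadj, hdr, hdw, hwb, hxb⟩ := branch_step hr hT hx hw hxw
      -- the gate of x in branch x' is x'
      obtain ⟨g, hg⟩ := hbranches x' hx' x
      have hGadj : G.Adj x x' := T.coe_adj_sub _ _ hadj
      have hdxx' : G.dist x x' = 1 := dist_eq_one_iff_adj.2 hGadj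
      have hx'mem : x' ∈ branch T r hr x' hx' := self_mem_branch hr hx'
      have hgd := hg.2 x' hx'mem
      have hgx : g ≠ x := by
        intro h
        rw [h] at hg
        exact hxb hg.1
      have hgpos : 0 < G.dist x g := by
        have := dist_pos hc (fun h => hgx h.symm)
        omega
      have hgx' : G.dist g x' = 0 := by omega
      have hgeq : g = x' := dist_eq_zero hc hgx'
      have hgw := hg.2 w hwb
      rw [hgeq] at hgw
      have hIH := IH (n - 1) (by omega) x' hx' w hwb (by omega)
      rw [hgeq] at hgd
      omega

/-- any two vertices of a branch are comparable along the tree path. -/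
lemma branch_comp {x w w' : V} (hx : x ∈ T.verts) (hw : w ∈ branch T r hr x hx)
    (hw' : w' ∈ branch T r hr x hx) :
    w' ∈ branch T r hr w hw.1 ∨ w ∈ branch T r hr w' hw'.1 := by
  classical
  have hTc := hT.isConnected
  obtain ⟨hwT, hweq⟩ := hw
  obtain ⟨hw'T, hw'eq⟩ := hw'
  obtain ⟨p, hp⟩ := hTc.exists_walk_length_eq_dist ⟨x, hx⟩ ⟨w, hwT⟩
  obtain ⟨q, hq⟩ := hTc.exists_walk_length_eq_dist ⟨w, hwT⟩ ⟨r, hr⟩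
  obtain ⟨p', hp'⟩ := hTc.exists_walk_length_eq_dist ⟨x, hx⟩ ⟨w', hw'T⟩
  obtain ⟨q', hq'⟩ := hTc.exists_walk_length_eq_dist ⟨w', hw'T⟩ ⟨r, hr⟩
  have hP : (p.append q).IsPath := by
    apply SimpleGraph.Walk.isPath_of_length_eq_dist
    rw [SimpleGraph.Walk.length_append, hp, hq, hweq]
  have hQ : (p'.append q').IsPath := by
    apply SimpleGraph.Walk.isPath_of_length_eq_dist
    rw [SimpleGraph.Walk.length_append, hp', hq', hw'eq]
  have hPQ : p.append q = p'.append q' := by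
    have h1 := (hT.existsUnique_path ⟨x, hx⟩ ⟨r, hr⟩).unique hP hQ
    exact h1
  have hmem : (⟨w', hw'T⟩ : T.verts) ∈ (p.append q).support := by
    rw [hPQ]
    rw [SimpleGraph.Walk.mem_support_append_iff]
    right
    exact q'.start_mem_support
  rw [SimpleGraph.Walk.mem_support_append_iff] at hmem
  rcases hmem with hm | hm
  · -- w' on the segment from x to w : w ∈ branch w'
    right
    have hsplit := p.take_spec hm
    have hlen : (p.takeUntil _ hm).length + (p.dropUntil _ hm).length = p.length := by
      rw [← SimpleGraph.Walk.length_append, hsplit]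
    have h1 : T.coe.dist (⟨x, hx⟩ : T.verts) ⟨w', hw'T⟩ ≤ (p.takeUntil _ hm).length :=
      SimpleGraph.dist_le _
    have h2 : T.coe.dist (⟨w', hw'T⟩ : T.verts) ⟨w, hwT⟩ ≤ (p.dropUntil _ hm).length :=
      SimpleGraph.dist_le _
    have ht := dtri hTc (⟨x, hx⟩ : T.verts) ⟨w', hw'T⟩ ⟨w, hwT⟩
    have hsum : T.coe.dist (⟨x, hx⟩ : T.verts) ⟨w', hw'T⟩ +
        T.coe.dist (⟨w', hw'T⟩ : T.verts) ⟨w, hwT⟩ =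
        T.coe.dist (⟨x, hx⟩ : T.verts) ⟨w, hwT⟩ := by omega
    exact ⟨hwT, by omega⟩
  · -- w' on the segment from w to r : w' ∈ branch w
    left
    have hsplit := q.take_spec hm
    have hlen : (q.takeUntil _ hm).length + (q.dropUntil _ hm).length = q.length := by
      rw [← SimpleGraph.Walk.length_append, hsplit]
    have h1 : T.coe.dist (⟨w, hwT⟩ : T.verts) ⟨w', hw'T⟩ ≤ (q.takeUntil _ hm).length :=
      SimpleGraph.dist_le _
    have h2 : T.coe.dist (⟨w', hw'T⟩ : T.verts) ⟨r, hr⟩ ≤ (q.dropUntil _ hm).length :=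
      SimpleGraph.dist_le _
    have ht := dtri hTc (⟨w, hwT⟩ : T.verts) ⟨w', hw'T⟩ ⟨r, hr⟩
    exact ⟨hw'T, by omega⟩

/-- clean form of `branch_dist_eq`. -/
lemma branch_dist_eq' (hc : G.Connected)
    (hbranches : ∀ (x : V) (hx : x ∈ T.verts), Gated G (branch T r hr x hx))
    {x w : V} (hx : x ∈ T.verts) (hwT : w ∈ T.verts)
    (heq : T.coe.dist ⟨x, hx⟩ ⟨w, hwT⟩ + T.coe.dist ⟨w, hwT⟩ ⟨r, hr⟩ =
      T.coe.dist ⟨x, hx⟩ ⟨r, hr⟩) :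
    G.dist x w = T.coe.dist ⟨x, hx⟩ ⟨w, hwT⟩ :=
  branch_dist_eq hr hT hc hbranches _ x hx w ⟨hwT, heq⟩ rfl

/-- thinness: two branch vertices are comparable in the `G`-metric. -/
lemma branch_thin (hc : G.Connected)
    (hbranches : ∀ (x : V) (hx : x ∈ T.verts), Gated G (branch T r hr x hx))
    {x w w' : V} (hx : x ∈ T.verts) (hw : w ∈ branch T r hr x hx)
    (hw' : w' ∈ branch T r hr x hx) :
    w ∈ gInterval G x w' ∨ w' ∈ gInterval G x w := by
  obtain ⟨hwT, hweq⟩ := hw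
  obtain ⟨hw'T, hw'eq⟩ := hw'
  have hdw : G.dist x w = T.coe.dist ⟨x, hx⟩ ⟨w, hwT⟩ :=
    branch_dist_eq' hr hT hc hbranches hx hwT hweq
  have hdw' : G.dist x w' = T.coe.dist ⟨x, hx⟩ ⟨w', hw'T⟩ :=
    branch_dist_eq' hr hT hc hbranches hx hw'T hw'eq
  rcases branch_comp hr hT hx ⟨hwT, hweq⟩ ⟨hw'T, hw'eq⟩ with h | h
  · -- w' ∈ branch w
    left
    obtain ⟨hT2, heq2⟩ := h
    have hdww' : G.dist w w' = T.coe.dist ⟨w, hwT⟩ ⟨w', hT2⟩ :=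
      branch_dist_eq' hr hT hc hbranches hwT hT2 heq2
    have hpf : (⟨w', hT2⟩ : T.verts) = ⟨w', hw'T⟩ := rfl
    rw [hpf] at hdww' heq2
    rw [mem_gI, hdw, hdw', hdww']
    omega
  · right
    obtain ⟨hT2, heq2⟩ := h
    have hdww' : G.dist w' w = T.coe.dist ⟨w', hw'T⟩ ⟨w, hT2⟩ :=
      branch_dist_eq' hr hT hc hbranches hw'T hT2 heq2
    have hpf : (⟨w, hT2⟩ : T.verts) = ⟨w, hwT⟩ := rfl
    rw [hpf] at hdww' heq2
    rw [mem_gI, hdw, hdw', hdww']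
    omega

end Tree

end QG
namespace QG

open SimpleGraph

variable {V : Type*} {G : SimpleGraph V}

section Endgame

variable (hG : MedianGraph G) (hc : G.Connected)
include hG hc

/-- the final contradiction: three gates with `x1 ∧ x3 = u` cannot exist. -/
lemma endgame {u r x1 x2 x3 : V} {S1 S2 S3 : Set V}
    (hx1 : x1 ∈ S1) (hx2 : x2 ∈ S2) (hx3 : x3 ∈ S3)
    (hr1 : r ∈ S1) (hr2 : r ∈ S2) (hr3 : r ∈ S3)
    (hg1 : ∀ w ∈ S1, G.dist u w = G.dist u x1 + G.dist x1 w)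
    (hg2 : ∀ w ∈ S2, G.dist u w = G.dist u x2 + G.dist x2 w)
    (hg3 : ∀ w ∈ S3, G.dist u w = G.dist u x3 + G.dist x3 w)
    (hv1 : ∀ a ∈ S1, ∀ b ∈ S1, ∀ w ∈ gInterval G a b, w ∈ S1)
    (hv2 : ∀ a ∈ S2, ∀ b ∈ S2, ∀ w ∈ gInterval G a b, w ∈ S2)
    (hv3 : ∀ a ∈ S3, ∀ b ∈ S3, ∀ w ∈ gInterval G a b, w ∈ S3)
    (hthin1 : ∀ w ∈ S1, ∀ w' ∈ S1, w ∈ gInterval G x1 w' ∨ w' ∈ gInterval G x1 w)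
    (hthin2 : ∀ w ∈ S2, ∀ w' ∈ S2, w ∈ gInterval G x2 w' ∨ w' ∈ gInterval G x2 w)
    (himp21 : ∀ w, w ∈ gInterval G u x2 → w ∈ S1 → w = x2)
    (himp23 : ∀ w, w ∈ gInterval G u x2 → w ∈ S3 → w = x2)
    (h12 : x1 ≠ x2) (h23 : x2 ≠ x3)
    (hm13 : meet hG u x1 x3 = u) : False := by
  set d1 := G.dist u x1 with hd1
  set d2 := G.dist u x2 with hd2
  set d3 := G.dist u x3 with hd3
  -- gated intersections
  have hS13 : Gated G (S1 ∩ S3) := by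
    apply convex_gated hc hG
    · intro a ha b hb w hw
      exact ⟨hv1 a ha.1 b hb.1 w hw, hv3 a ha.2 b hb.2 w hw⟩
    · exact ⟨r, hr1, hr3⟩
  have hS123 : Gated G (S1 ∩ S2 ∩ S3) := by
    apply convex_gated hc hG
    · intro a ha b hb w hw
      exact ⟨⟨hv1 a ha.1.1 b hb.1.1 w hw, hv2 a ha.1.2 b hb.1.2 w hw⟩,
        hv3 a ha.2 b hb.2 w hw⟩
    · exact ⟨r, ⟨hr1, hr2⟩, hr3⟩
  obtain ⟨C, hC⟩ := hS13 u
  obtain ⟨D, hD⟩ := hS123 u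
  -- basic gate memberships
  have hx1C : x1 ∈ gInterval G u C := mem_gI.2 (hg1 C hC.1.1).symm
  have hx3C : x3 ∈ gInterval G u C := mem_gI.2 (hg3 C hC.1.2).symm
  have hx1D : x1 ∈ gInterval G u D := mem_gI.2 (hg1 D hD.1.1.1).symm
  have hx2D : x2 ∈ gInterval G u D := mem_gI.2 (hg2 D hD.1.1.2).symm
  have hx3D : x3 ∈ gInterval G u D := mem_gI.2 (hg3 D hD.1.2).symm
  have hCD : C ∈ gInterval G u D := mem_gI.2 (hC.2 D ⟨hD.1.1.1, hD.1.2⟩).symm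
  -- C is the join of x1 and x3
  have hCjoin : med hG x1 x3 C = C := by
    obtain ⟨q1, q2, q3, q4⟩ := join_above hG hc hx1C hx3C
    set q := med hG x1 x3 C with hqdef
    have hqS1 : q ∈ S1 := hv1 x1 hx1 C hC.1.1 q (gI_symm (med_spec hG x1 x3 C).2.2)
    have hqS3 : q ∈ S3 := hv3 x3 hx3 C hC.1.2 q (med_spec hG x1 x3 C).2.1
    have e1 := hC.2 q ⟨hqS1, hqS3⟩
    have e2 : G.dist u q + G.dist q C = G.dist u C := q3
    have := dist_eq_zero hc (by omega : G.dist q C = 0)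
    exact this
  have hu13 : G.dist x1 u + G.dist u x3 = G.dist x1 x3 := by
    have := meet_mem_I hG u x1 x3; rw [hm13] at this; exact this
  have hcx1u : G.dist x1 u = d1 := dcomm G x1 u
  have hCI : C ∈ gInterval G x1 x3 := by
    rw [← hCjoin]; exact (join_above hG hc hx1C hx3C).2.2.2
  have hdC : G.dist u C = d1 + d3 := by
    have := ub_height hx1C hx3C hCI
    omega
  -- meets a12, a23 and strictness
  have ha12x1 := meet_mem_x hG u x1 x2
  have ha12x2 := meet_mem_y hG u x1 x2
  set a12 := meet hG u x1 x2 with ha12def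
  set A12 := G.dist u a12 with hA12
  have hA12le : A12 ≤ d1 := gI_dist_le ha12x1
  have hA12ne : A12 ≠ d1 := by
    intro h
    have : a12 = x1 := eq_of_height hc ha12x1 h
    have : x1 ∈ gInterval G u x2 := by rw [← this]; exact ha12x2
    exact h12 (himp21 x1 this hx1)
  have ha23x2 := meet_mem_x hG u x2 x3
  have ha23x3 := meet_mem_y hG u x2 x3
  set a23 := meet hG u x2 x3 with ha23def
  set A23 := G.dist u a23 with hA23
  have hA23le : A23 ≤ d3 := gI_dist_le ha23x3
  have hA23ne : A23 ≠ d3 := by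
    intro h
    have : a23 = x3 := eq_of_height hc ha23x3 h
    have : x3 ∈ gInterval G u x2 := by rw [← this]; exact ha23x2
    exact h23 ((himp23 x3 this hx3).symm)
  -- the join κ1 of x1 and x2
  obtain ⟨k1, k2, k3, k4⟩ := join_above hG hc hx1D hx2D
  set κ1 := med hG x1 x2 D with hκ1def
  have hκ1mod : A12 + G.dist u κ1 = d1 + d2 := mod_sum hG hc hx1D hx2D
  have hκ1x1D : κ1 ∈ gInterval G x1 D := (interval_trans' hc k3 k1).2
  have hCx1D : C ∈ gInterval G x1 D := (interval_trans' hc hCD hx1C).2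
  have hκ1S1 : κ1 ∈ S1 := hv1 x1 hx1 D hD.1.1.1 κ1 hκ1x1D
  have hCS1 : C ∈ S1 := hC.1.1
  have hCx1Dmem : C ∈ S1 := hCS1
  rcases hthin1 κ1 hκ1S1 C hCS1 with hcase | hcase
  · -- case A : κ1 ≤ C, hence x2 ≤ C
    have hκ1uC : κ1 ∈ gInterval G u C := (interval_trans hc hx1C hcase).1
    have hx2C : x2 ∈ gInterval G u C := (interval_trans' hc hκ1uC k2).1
    -- box: d2 = A12 + A23
    have hbox := box hG hc hm13 hx1C hx3C (z := x2) (by rw [hCjoin]; exact hx2C)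
    rw [← ha23def, ← hA23] at hbox
    have hmeq : meet hG u x2 x1 = a12 := (meet_comm hG u x2 x1).trans ha12def.symm
    rw [hmeq, ← hA12] at hbox
    -- the join κ2 of x2 and x3
    obtain ⟨l1, l2, l3, l4⟩ := join_above hG hc hx2D hx3D
    set κ2 := med hG x2 x3 D with hκ2def
    have hκ2mod : A23 + G.dist u κ2 = d2 + d3 := mod_sum hG hc hx2D hx3D
    have hκ1x2D : κ1 ∈ gInterval G x2 D := (interval_trans' hc k3 k2).2
    have hκ2x2D : κ2 ∈ gInterval G x2 D := (interval_trans' hc l3 l1).2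
    have hκ1S2 : κ1 ∈ S2 := hv2 x2 hx2 D hD.1.1.2 κ1 hκ1x2D
    have hκ2S2 : κ2 ∈ S2 := hv2 x2 hx2 D hD.1.1.2 κ2 hκ2x2D
    -- numeric contradiction
    have e1 : d1 + G.dist x1 κ1 = G.dist u κ1 := k1
    have e2 : d2 + G.dist x2 κ1 = G.dist u κ1 := k2
    have e3 : d2 + G.dist x2 κ2 = G.dist u κ2 := l1
    have e4 : d3 + G.dist x3 κ2 = G.dist u κ2 := l2
    have t1 := dtri hc x1 κ1 x3
    have t2 := dtri hc κ1 κ2 x3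
    have c1 : G.dist κ2 x3 = G.dist x3 κ2 := dcomm G κ2 x3
    rcases hthin2 κ1 hκ1S2 κ2 hκ2S2 with hcc | hcc
    · have e5 : G.dist x2 κ1 + G.dist κ1 κ2 = G.dist x2 κ2 := hcc
      omega
    · have e5 : G.dist x2 κ2 + G.dist κ2 κ1 = G.dist x2 κ1 := hcc
      have c2 : G.dist κ1 κ2 = G.dist κ2 κ1 := dcomm G κ1 κ2
      omega
  · -- case B : C ≤ κ1, hence x3 ≤ κ1
    have hCuκ1 : C ∈ gInterval G u κ1 := (interval_trans hc k1 hcase).1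
    have hx3κ1 : x3 ∈ gInterval G u κ1 := (interval_trans' hc hCuκ1 hx3C).1
    have ha12κ1 : a12 ∈ gInterval G u κ1 := (interval_trans' hc k1 ha12x1).1
    -- W := x3 ∨ a12
    obtain ⟨W1, W2, W3, W4⟩ := join_above hG hc hx3κ1 ha12κ1
    set W := med hG x3 a12 κ1 with hWdef
    have hmW : meet hG u x3 a12 = u := by
      have m'a := meet_mem_y hG u x3 a12
      have m'x3 := meet_mem_x hG u x3 a12
      have m'x1 : meet hG u x3 a12 ∈ gInterval G u x1 :=
        (interval_trans' hc ha12x1 m'a).1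
      have := meet_inter hG hc m'x1 m'x3
      rw [hm13] at this
      exact gI_self hc this
    have htW : G.dist u W = d3 + A12 := by
      have hms := mod_sum hG hc hx3κ1 ha12κ1
      rw [← hWdef, hmW] at hms
      simp only [SimpleGraph.dist_self] at hms
      omega
    -- box at base a12
    have hre : meet hG a12 x1 x2 = a12 :=
      meet_eq hG gI_left gI_left (meet_mem_I hG u x1 x2)
    have hjoin12 : med hG x1 x2 κ1 = κ1 := by
      have := join_unique hG hc (t := κ1) (t' := D) k1 k2 hx1D hx2D
      rw [this]
    have hx1a : x1 ∈ gInterval G a12 κ1 := (interval_trans' hc k1 ha12x1).2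
    have hx2a : x2 ∈ gInterval G a12 κ1 := (interval_trans' hc k2 ha12x2).2
    have hWa : W ∈ gInterval G a12 κ1 := (interval_trans' hc W3 W2).2
    have hbox2 := box hG hc (u := a12) (z1 := x1) (z3 := x2) (tt := κ1) (z := W)
      hre hx1a hx2a (by rw [hjoin12]; exact hWa)
    -- bounds on the two terms
    set ω1 := meet hG a12 W x1 with hω1def
    set ω2 := meet hG a12 W x2 with hω2def
    have hω1W : ω1 ∈ gInterval G a12 W := meet_mem_x hG a12 W x1
    have hω1x1 : ω1 ∈ gInterval G a12 x1 := meet_mem_y hG a12 W x1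
    have hω2W : ω2 ∈ gInterval G a12 W := meet_mem_x hG a12 W x2
    have hω2x2 : ω2 ∈ gInterval G a12 x2 := meet_mem_y hG a12 W x2
    have hω1u := interval_trans hc ha12x1 hω1x1
    have hω1uW := interval_trans hc W2 hω1W
    have hω2u := interval_trans hc ha12x2 hω2x2
    have hω2uW := interval_trans hc W2 hω2W
    -- term 1 = 0
    have hm1 : meet hG u ω1 x3 = u := by
      have t1' : meet hG u ω1 x3 ∈ gInterval G u x1 :=
        (interval_trans' hc hω1u.1 (meet_mem_x hG u ω1 x3)).1
      have := meet_inter hG hc t1' (meet_mem_y hG u ω1 x3)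
      rw [hm13] at this
      exact gI_self hc this
    have hterm1 : G.dist u ω1 ≤ A12 := by
      have hms := mod_sum hG hc hω1uW.1 W1
      rw [hm1] at hms
      simp only [SimpleGraph.dist_self] at hms
      have hle := gI_dist_le (join_above hG hc hω1uW.1 W1).2.2.1
      omega
    -- term 2 ≤ A23
    have hterm2 : G.dist u ω2 ≤ A12 + A23 := by
      have hmm : meet hG u ω2 x3 ∈ gInterval G u a23 := by
        have t2' : meet hG u ω2 x3 ∈ gInterval G u x2 :=
          (interval_trans' hc hω2u.1 (meet_mem_x hG u ω2 x3)).1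
        exact meet_inter hG hc t2' (meet_mem_y hG u ω2 x3)
      have hle2 : G.dist u (meet hG u ω2 x3) ≤ A23 := gI_dist_le hmm
      have hms := mod_sum hG hc hω2uW.1 W1
      have hle := gI_dist_le (join_above hG hc hω2uW.1 W1).2.2.1
      omega
    -- combine
    have f1 : A12 + G.dist a12 W = G.dist u W := W2
    have f2 : A12 + G.dist a12 ω1 = G.dist u ω1 := hω1u.2
    have f3 : A12 + G.dist a12 ω2 = G.dist u ω2 := hω2u.2
    omega

end Endgame

end QG
/-- In a cube-free median graph, any rooted tree with gated branches is quasigated: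
each outside vertex has at most two imprints on it. -/
theorem tree_gated_branches_quasigated {V : Type*} (G : SimpleGraph V)
    (hG : MedianGraph G) (hcf : CubeFree G)
    (T : G.Subgraph) (hT : T.coe.IsTree) (r : V) (hr : r ∈ T.verts)
    (hbranches : ∀ (x : V) (hx : x ∈ T.verts),
      Gated G {w : V | ∃ hw : w ∈ T.verts,
        T.coe.dist ⟨x, hx⟩ ⟨w, hw⟩ + T.coe.dist ⟨w, hw⟩ ⟨r, hr⟩ =
          T.coe.dist ⟨x, hx⟩ ⟨r, hr⟩})
    (u : V) (hu : u ∉ T.verts) :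
    ∃ a b : V, imprints G u T.verts ⊆ {a, b} := by
  classical
  by_contra hcon
  push_neg at hcon
  have hc : G.Connected := hG.1
  have hbr : ∀ (x : V) (hx : x ∈ T.verts), Gated G (QG.branch T r hr x hx) := hbranches
  -- extract three distinct imprints
  have hex : ∀ a b : V, ∃ c, c ∈ imprints G u T.verts ∧ c ≠ a ∧ c ≠ b := by
    intro a b
    have h := hcon a b
    rw [Set.not_subset] at h
    obtain ⟨c, hc1, hc2⟩ := h
    refine ⟨c, hc1, ?_, ?_⟩ <;> · intro he; subst he; simp at hc2
  obtain ⟨y1, hy1, -, -⟩ := hex u u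
  obtain ⟨y2, hy2, hy21, -⟩ := hex y1 y1
  obtain ⟨y3, hy3, hy31, hy32⟩ := hex y1 y2
  obtain ⟨hy1T, hy1I⟩ := hy1
  obtain ⟨hy2T, hy2I⟩ := hy2
  obtain ⟨hy3T, hy3I⟩ := hy3
  have himpr1 : ∀ w, w ∈ gInterval G u y1 → w ∈ T.verts → w = y1 := by
    intro w h1 h2
    have : w ∈ gInterval G u y1 ∩ T.verts := ⟨h1, h2⟩
    rw [hy1I] at this
    exact this
  have himpr2 : ∀ w, w ∈ gInterval G u y2 → w ∈ T.verts → w = y2 := by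
    intro w h1 h2
    have : w ∈ gInterval G u y2 ∩ T.verts := ⟨h1, h2⟩
    rw [hy2I] at this
    exact this
  have himpr3 : ∀ w, w ∈ gInterval G u y3 → w ∈ T.verts → w = y3 := by
    intro w h1 h2
    have : w ∈ gInterval G u y3 ∩ T.verts := ⟨h1, h2⟩
    rw [hy3I] at this
    exact this
  -- the gate of u in each initial branch is the imprint itself
  have hgate : ∀ (y : V) (hy : y ∈ T.verts),
      (∀ w, w ∈ gInterval G u y → w ∈ T.verts → w = y) →
      ∀ w ∈ QG.branch T r hr y hy, G.dist u w = G.dist u y + G.dist y w := by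
    intro y hy himp w hw
    obtain ⟨g, hg⟩ := hbr y hy u
    have hgI : g ∈ gInterval G u y :=
      QG.mem_gI.2 (hg.2 y (QG.self_mem_branch hr hy)).symm
    have hgT : g ∈ T.verts := QG.branch_subset hr hy hg.1
    have hgy : g = y := himp g hgI hgT
    have := hg.2 w hw
    rw [hgy] at this
    exact this
  have hgate1 := hgate y1 hy1T himpr1
  have hgate2 := hgate y2 hy2T himpr2
  have hgate3 := hgate y3 hy3T himpr3
  -- normalize the basepoint: g0 := (y1 ∧ y2) ∧ y3 over u
  set m12 := QG.meet hG u y1 y2 with hm12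
  set g0 := QG.meet hG u m12 y3 with hg0
  have hg0y1 : g0 ∈ gInterval G u y1 :=
    (QG.interval_trans' hc (QG.meet_mem_x hG u y1 y2) (QG.meet_mem_x hG u m12 y3)).1
  have hg0y2 : g0 ∈ gInterval G u y2 :=
    (QG.interval_trans' hc (QG.meet_mem_y hG u y1 y2) (QG.meet_mem_x hG u m12 y3)).1
  have hg0y3 : g0 ∈ gInterval G u y3 := QG.meet_mem_y hG u m12 y3
  have htrip : ∀ z, z ∈ gInterval G g0 y1 → z ∈ gInterval G g0 y2 →
      z ∈ gInterval G g0 y3 → z = g0 := by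
    intro z h1 h2 h3
    have hz1 : z ∈ gInterval G u y1 := (QG.interval_trans hc hg0y1 h1).1
    have hz2 : z ∈ gInterval G u y2 := (QG.interval_trans hc hg0y2 h2).1
    have hz3 : z ∈ gInterval G u y3 := (QG.interval_trans hc hg0y3 h3).1
    have hzm : z ∈ gInterval G u m12 := QG.meet_inter hG hc hz1 hz2
    have hzg : z ∈ gInterval G u g0 := QG.meet_inter hG hc hzm hz3
    have e1 : G.dist u z + G.dist z g0 = G.dist u g0 := hzg
    have e2 : G.dist g0 z + G.dist z y1 = G.dist g0 y1 := h1
    have e3 : G.dist u g0 + G.dist g0 y1 = G.dist u y1 := hg0y1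
    have e4 : G.dist u z + G.dist z y1 = G.dist u y1 := hz1
    have c1 : G.dist g0 z = G.dist z g0 := QG.dcomm G g0 z
    exact QG.dist_eq_zero hc (by omega : G.dist z g0 = 0)
  have hg0T : g0 ∉ T.verts := by
    intro hmem
    have h1 := himpr1 g0 hg0y1 hmem
    have h2 := himpr2 g0 hg0y2 hmem
    exact hy21 (h2.symm.trans h1)
  -- imprints relative to g0
  have himpr1' : ∀ w, w ∈ gInterval G g0 y1 → w ∈ T.verts → w = y1 :=
    fun w h1 h2 => himpr1 w (QG.interval_trans hc hg0y1 h1).1 h2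
  have himpr2' : ∀ w, w ∈ gInterval G g0 y2 → w ∈ T.verts → w = y2 :=
    fun w h1 h2 => himpr2 w (QG.interval_trans hc hg0y2 h1).1 h2
  have himpr3' : ∀ w, w ∈ gInterval G g0 y3 → w ∈ T.verts → w = y3 :=
    fun w h1 h2 => himpr3 w (QG.interval_trans hc hg0y3 h1).1 h2
  -- gate property relative to g0
  have hgate1' : ∀ w ∈ QG.branch T r hr y1 hy1T,
      G.dist g0 w = G.dist g0 y1 + G.dist y1 w := by
    intro w hw
    have e := hgate1 w hw
    have eg : G.dist u g0 + G.dist g0 y1 = G.dist u y1 := hg0y1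
    have t1 := QG.dtri hc g0 y1 w
    have t2 := QG.dtri hc u g0 w
    omega
  have hgate2' : ∀ w ∈ QG.branch T r hr y2 hy2T,
      G.dist g0 w = G.dist g0 y2 + G.dist y2 w := by
    intro w hw
    have e := hgate2 w hw
    have eg : G.dist u g0 + G.dist g0 y2 = G.dist u y2 := hg0y2
    have t1 := QG.dtri hc g0 y2 w
    have t2 := QG.dtri hc u g0 w
    omega
  have hgate3' : ∀ w ∈ QG.branch T r hr y3 hy3T,
      G.dist g0 w = G.dist g0 y3 + G.dist y3 w := by
    intro w hw
    have e := hgate3 w hw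
    have eg : G.dist u g0 + G.dist g0 y3 = G.dist u y3 := hg0y3
    have t1 := QG.dtri hc g0 y3 w
    have t2 := QG.dtri hc u g0 w
    omega
  -- convexity and thinness of branches
  have hv1 : ∀ a ∈ QG.branch T r hr y1 hy1T, ∀ b ∈ QG.branch T r hr y1 hy1T,
      ∀ w ∈ gInterval G a b, w ∈ QG.branch T r hr y1 hy1T :=
    fun a ha b hb w hw => QG.gated_convex hc (hbr y1 hy1T) ha hb hw
  have hv2 : ∀ a ∈ QG.branch T r hr y2 hy2T, ∀ b ∈ QG.branch T r hr y2 hy2T,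
      ∀ w ∈ gInterval G a b, w ∈ QG.branch T r hr y2 hy2T :=
    fun a ha b hb w hw => QG.gated_convex hc (hbr y2 hy2T) ha hb hw
  have hv3 : ∀ a ∈ QG.branch T r hr y3 hy3T, ∀ b ∈ QG.branch T r hr y3 hy3T,
      ∀ w ∈ gInterval G a b, w ∈ QG.branch T r hr y3 hy3T :=
    fun a ha b hb w hw => QG.gated_convex hc (hbr y3 hy3T) ha hb hw
  have hth1 : ∀ w ∈ QG.branch T r hr y1 hy1T, ∀ w' ∈ QG.branch T r hr y1 hy1T,
      w ∈ gInterval G y1 w' ∨ w' ∈ gInterval G y1 w :=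
    fun w hw w' hw' => QG.branch_thin hr hT hc hbr hy1T hw hw'
  have hth2 : ∀ w ∈ QG.branch T r hr y2 hy2T, ∀ w' ∈ QG.branch T r hr y2 hy2T,
      w ∈ gInterval G y2 w' ∨ w' ∈ gInterval G y2 w :=
    fun w hw w' hw' => QG.branch_thin hr hT hc hbr hy2T hw hw'
  have hth3 : ∀ w ∈ QG.branch T r hr y3 hy3T, ∀ w' ∈ QG.branch T r hr y3 hy3T,
      w ∈ gInterval G y3 w' ∨ w' ∈ gInterval G y3 w :=
    fun w hw w' hw' => QG.branch_thin hr hT hc hbr hy3T hw hw'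
  have hs1 := QG.self_mem_branch hr hy1T
  have hs2 := QG.self_mem_branch hr hy2T
  have hs3 := QG.self_mem_branch hr hy3T
  have hrb1 := QG.root_mem_branch hr hy1T
  have hrb2 := QG.root_mem_branch hr hy2T
  have hrb3 := QG.root_mem_branch hr hy3T
  have hsub1 := QG.branch_subset hr hy1T
  have hsub2 := QG.branch_subset hr hy2T
  have hsub3 := QG.branch_subset hr hy3T
  -- three cases on which pairwise meet over g0 is trivial
  by_cases hb13 : QG.meet hG g0 y1 y3 = g0
  · exact QG.endgame hG hc hs1 hs2 hs3 hrb1 hrb2 hrb3 hgate1' hgate2' hgate3'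
      hv1 hv2 hv3 hth1 hth2
      (fun w h1 h2 => himpr2' w h1 (hsub1 h2))
      (fun w h1 h2 => himpr2' w h1 (hsub3 h2))
      (fun h => hy21 h.symm) (fun h => hy32 h.symm) hb13
  by_cases hb12 : QG.meet hG g0 y1 y2 = g0
  · exact QG.endgame hG hc hs1 hs3 hs2 hrb1 hrb3 hrb2 hgate1' hgate3' hgate2'
      hv1 hv3 hv2 hth1 hth3
      (fun w h1 h2 => himpr3' w h1 (hsub1 h2))
      (fun w h1 h2 => himpr3' w h1 (hsub2 h2))
      (fun h => hy31 h.symm) hy32 hb12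
  by_cases hb23 : QG.meet hG g0 y2 y3 = g0
  · exact QG.endgame hG hc hs2 hs1 hs3 hrb2 hrb1 hrb3 hgate2' hgate1' hgate3'
      hv2 hv1 hv3 hth2 hth1
      (fun w h1 h2 => himpr1' w h1 (hsub2 h2))
      (fun w h1 h2 => himpr1' w h1 (hsub3 h2))
      hy21 (fun h => hy31 h.symm) hb23
  -- otherwise all three pairwise meets are nontrivial: build a cube
  · obtain ⟨p, hpd, hpI⟩ := QG.exists_step hc (fun h => hb12 h.symm)
    obtain ⟨q, hqd, hqI⟩ := QG.exists_step hc (fun h => hb13 h.symm)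
    obtain ⟨s, hsd, hsI⟩ := QG.exists_step hc (fun h => hb23 h.symm)
    have hp1 : p ∈ gInterval G g0 y1 :=
      (QG.interval_trans' hc (QG.meet_mem_x hG g0 y1 y2) hpI).1
    have hp2 : p ∈ gInterval G g0 y2 :=
      (QG.interval_trans' hc (QG.meet_mem_y hG g0 y1 y2) hpI).1
    have hq1 : q ∈ gInterval G g0 y1 :=
      (QG.interval_trans' hc (QG.meet_mem_x hG g0 y1 y3) hqI).1
    have hq3 : q ∈ gInterval G g0 y3 :=
      (QG.interval_trans' hc (QG.meet_mem_y hG g0 y1 y3) hqI).1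
    have hs2' : s ∈ gInterval G g0 y2 :=
      (QG.interval_trans' hc (QG.meet_mem_x hG g0 y2 y3) hsI).1
    have hs3' : s ∈ gInterval G g0 y3 :=
      (QG.interval_trans' hc (QG.meet_mem_y hG g0 y2 y3) hsI).1
    have hpq : p ≠ q := by
      intro h
      subst h
      have := htrip p hp1 hp2 hq3
      rw [this] at hpd
      simp [SimpleGraph.dist_self] at hpd
    have hps : p ≠ s := by
      intro h
      subst h
      have := htrip p hp1 hs2' hs3'
      rw [this] at hpd
      simp [SimpleGraph.dist_self] at hpd
    have hqs : q ≠ s := by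
      intro h
      subst h
      have := htrip q hq1 hs2' hq3
      rw [this] at hqd
      simp [SimpleGraph.dist_self] at hqd
    -- pairwise distance 2
    have hdist2 : ∀ a b : V, G.dist g0 a = 1 → G.dist g0 b = 1 → a ≠ b →
        G.dist a b = 2 := by
      intro a b ha hb hab
      have hma := QG.meet_mem_x hG g0 a b
      have hmb := QG.meet_mem_y hG g0 a b
      have hle : G.dist g0 (QG.meet hG g0 a b) ≤ 1 := by
        have := QG.gI_dist_le hma; omega
      rcases Nat.lt_or_ge (G.dist g0 (QG.meet hG g0 a b)) 1 with h | h
      · have : g0 = QG.meet hG g0 a b := QG.dist_eq_zero hc (by omega)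
        have hm := QG.meet_mem_I hG g0 a b
        rw [← this] at hm
        have e : G.dist a g0 + G.dist g0 b = G.dist a b := hm
        have c := QG.dcomm G a g0
        omega
      · exfalso
        have h1 : QG.meet hG g0 a b = a := QG.eq_of_height hc hma (by omega)
        have h2 : QG.meet hG g0 a b = b := QG.eq_of_height hc hmb (by omega)
        exact hab (h1.symm.trans h2)
    have dpq := hdist2 p q hpd hqd hpq
    have dps := hdist2 p s hpd hsd hps
    have dqs := hdist2 q s hqd hsd hqs
    -- squares
    have hsq : ∀ a b y : V, G.dist g0 a = 1 → G.dist g0 b = 1 → G.dist a b = 2 →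
        a ∈ gInterval G g0 y → b ∈ gInterval G g0 y →
        ∃ w : V, G.dist a w = 1 ∧ G.dist b w = 1 ∧ w ≠ g0 := by
      intro a b y ha hb hab hay hby
      obtain ⟨j1, j2, j3, j4⟩ := QG.join_above hG hc hay hby
      refine ⟨QG.med hG a b y, ?_, ?_, ?_⟩
      · have e1 : G.dist g0 a + G.dist a (QG.med hG a b y) = G.dist g0 (QG.med hG a b y) := j1
        have := QG.ub_height j1 j2 j4
        omega
      · have e1 : G.dist g0 b + G.dist b (QG.med hG a b y) = G.dist g0 (QG.med hG a b y) := j2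
        have := QG.ub_height j1 j2 j4
        omega
      · intro h
        have := QG.ub_height j1 j2 j4
        rw [h] at this
        simp [SimpleGraph.dist_self] at this
        omega
    obtain ⟨wpq, hw1a, hw1b, hw1v⟩ := hsq p q y1 hpd hqd dpq hp1 hq1
    obtain ⟨wps, hw2a, hw2b, hw2v⟩ := hsq p s y2 hpd hsd dps hp2 hs2'
    obtain ⟨wqs, hw3a, hw3b, hw3v⟩ := hsq q s y3 hqd hsd dqs hq3 hs3'
    exact QG.cube_of_squares hG hc hcf hpd hqd hsd hpq hps hqs
      hw1a hw1b hw1v hw2a hw2b hw2v hw3a hw3b hw3v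
end

section
/- Let G be a median graph, z a vertex of G, and let u, v be vertices of G with gates x and y, respectively, in the star St(z). Then I(x,z) ∩ I(y,z) = {z} if and only if d_G(u,v) = d_G(u,z) + d_G(z,v), i.e., z ∈ I(u,v). -/
open SimpleGraph Set

private lemma self_mem_gStar {V : Type*} (G : SimpleGraph V) (z : V) : z ∈ gStar G z := by
  refine ⟨0, fun _ => z, ?_, ?_, ⟨∅, rfl⟩, ⟨∅, rfl⟩⟩
  · intro a b _
    have : a = ∅ := Finset.eq_empty_of_isEmpty a
    have : b = ∅ := Finset.eq_empty_of_isEmpty b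
    simp_all
  · intro A B
    have hA : A = ∅ := Finset.eq_empty_of_isEmpty A
    have hB : B = ∅ := Finset.eq_empty_of_isEmpty B
    subst hA; subst hB
    simp

private lemma adj_mem_gStar {V : Type*} {G : SimpleGraph V} {z w : V} (h : G.Adj z w) :
    w ∈ gStar G z := by
  classical
  have hne : z ≠ w := h.ne
  refine ⟨1, fun A => if A = ∅ then z else w, ?_, ?_, ⟨∅, by simp⟩, ⟨{0}, by simp⟩⟩
  · have hcases : ∀ A : Finset (Fin 1), A = ∅ ∨ A = {0} := by decide
    intro a b hab
    rcases hcases a with ha | ha <;> rcases hcases b with hb | hb <;>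
      subst ha <;> subst hb <;> simp_all
  · have hcases : ∀ A : Finset (Fin 1), A = ∅ ∨ A = {0} := by decide
    intro A B
    rcases hcases A with hA | hA <;> rcases hcases B with hB | hB <;>
      subst hA <;> subst hB <;>
      simp [h, h.symm, symmDiff_def]

/-- Let `x`, `y` be the gates in `St(z)` of vertices `u`, `v` of a median graph.
Then `I(x,z) ∩ I(y,z) = {z}` iff `z` lies on a shortest `(u,v)`-path. -/
theorem separated_iff_through_z {V : Type*} (G : SimpleGraph V)
    (hG : MedianGraph G) (z u v x y : V)
    (hx : IsGate G (gStar G z) u x) (hy : IsGate G (gStar G z) v y) :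
    gInterval G x z ∩ gInterval G y z = {z} ↔
      G.dist u v = G.dist u z + G.dist z v := by
  classical
  obtain ⟨hconn, hmed⟩ := hG
  obtain ⟨hxS, hxg⟩ := hx
  obtain ⟨hyS, hyg⟩ := hy
  have hz : z ∈ gStar G z := self_mem_gStar G z
  have hux : G.dist u z = G.dist u x + G.dist x z := hxg z hz
  have hvy : G.dist v z = G.dist v y + G.dist y z := hyg z hz
  constructor
  · -- separation implies z on a shortest (u,v)-path
    intro hsep
    obtain ⟨m, ⟨hm1, hm2, hm3⟩, -⟩ := hmed u v z
    -- hm1 : m ∈ I(u,v), hm2 : m ∈ I(v,z), hm3 : m ∈ I(z,u)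
    by_cases hmz : m = z
    · subst hmz; exact hm1.symm
    · exfalso
      have hdzm : G.dist z m ≠ 0 := fun h0 => hmz (hconn.dist_eq_zero_iff.mp h0).symm
      obtain ⟨p, hp⟩ := (hconn z m).exists_walk_length_eq_dist
      cases p with
      | nil => exact hmz rfl
      | cons hadj q =>
        rename_i w
        -- w is a neighbor of z on a geodesic from z to m
        have hwS : w ∈ gStar G z := adj_mem_gStar hadj
        have hzw1 : G.dist z w = 1 := SimpleGraph.dist_eq_one_iff_adj.mpr hadj
        have hwm : G.dist w m ≤ G.dist z m - 1 := by
          have := SimpleGraph.dist_le q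
          simp only [SimpleGraph.Walk.length_cons] at hp
          omega
        have hzwm : G.dist z w + G.dist w m = G.dist z m := by
          have htri := hconn.dist_triangle (u := z) (v := w) (w := m)
          omega
        -- w ∈ I(z,u)
        have hwzu : G.dist z w + G.dist w u = G.dist z u := by
          have h1 : G.dist z w + G.dist w u ≤ G.dist z u := by
            have htri := hconn.dist_triangle (u := w) (v := m) (w := u)
            have hm3' : G.dist z m + G.dist m u = G.dist z u := hm3
            omega
          have h2 := hconn.dist_triangle (u := z) (v := w) (w := u)
          omega
        -- w ∈ I(z,v)
        have hwzv : G.dist z w + G.dist w v = G.dist z v := by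
          have h1 : G.dist z w + G.dist w v ≤ G.dist z v := by
            have htri := hconn.dist_triangle (u := w) (v := m) (w := v)
            have hm2' : G.dist v m + G.dist m z = G.dist v z := hm2
            have e1 : G.dist v m = G.dist m v := SimpleGraph.dist_comm ..
            have e2 : G.dist m z = G.dist z m := SimpleGraph.dist_comm ..
            have e3 : G.dist v z = G.dist z v := SimpleGraph.dist_comm ..
            omega
          have h2 := hconn.dist_triangle (u := z) (v := w) (w := v)
          omega
        -- gates: w ∈ I(x,z) and w ∈ I(y,z)
        have hguw : G.dist u w = G.dist u x + G.dist x w := hxg w hwS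
        have hgvw : G.dist v w = G.dist v y + G.dist y w := hyg w hwS
        have hwxz : w ∈ gInterval G x z := by
          show G.dist x w + G.dist w z = G.dist x z
          have e1 : G.dist w u = G.dist u w := SimpleGraph.dist_comm ..
          have e2 : G.dist z u = G.dist u z := SimpleGraph.dist_comm ..
          have e3 : G.dist w z = G.dist z w := SimpleGraph.dist_comm ..
          omega
        have hwyz : w ∈ gInterval G y z := by
          show G.dist y w + G.dist w z = G.dist y z
          have e1 : G.dist w v = G.dist v w := SimpleGraph.dist_comm ..
          have e2 : G.dist z v = G.dist v z := SimpleGraph.dist_comm ..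
          have e3 : G.dist w z = G.dist z w := SimpleGraph.dist_comm ..
          omega
        have : w ∈ ({z} : Set V) := hsep ▸ ⟨hwxz, hwyz⟩
        have : w = z := this
        subst this
        exact G.irrefl hadj
  · -- z on a shortest (u,v)-path implies separation
    intro hsum
    ext w
    simp only [Set.mem_inter_iff, Set.mem_singleton_iff]
    constructor
    · rintro ⟨hw1, hw2⟩
      have hw1' : G.dist x w + G.dist w z = G.dist x z := hw1
      have hw2' : G.dist y w + G.dist w z = G.dist y z := hw2
      have h1 : G.dist u w + G.dist w z ≤ G.dist u z := by
        have htri := hconn.dist_triangle (u := u) (v := x) (w := w)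
        omega
      have h2 : G.dist v w + G.dist w z ≤ G.dist v z := by
        have htri := hconn.dist_triangle (u := v) (v := y) (w := w)
        omega
      have h3 := hconn.dist_triangle (u := u) (v := w) (w := v)
      have e1 : G.dist w v = G.dist v w := SimpleGraph.dist_comm ..
      have e2 : G.dist z v = G.dist v z := SimpleGraph.dist_comm ..
      have hwz0 : G.dist w z = 0 := by omega
      exact (hconn.dist_eq_zero_iff.mp hwz0)
    · intro hw
      rw [hw]
      constructor <;> simp [gInterval]
end

section
/- Let G be a cube-free median graph, z a vertex of G, and let the fibers of the star St(z) be classified: F(x) is a panel if d_G(x,z) = 1 and a cone if d_G(x,z) = 2. Suppose u belongs to a panel F(x), v belongs to a cone F(y), and F(x) and F(y) are neighboring fibers (equivalently, x and y are adjacent). Let u₁ and u₂ be the imprints of u on the total boundary ∂*F(x) (possibly u₁ = u₂) and let v⁺ be the gate of v in F(x). Then d_G(u,v) = min{ d_G(u,u₁) + d_G(u₁,v⁺), d_G(u,u₂) + d_G(u₂,v⁺) } + d_G(v⁺,v). -/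
open SimpleGraph Set

/- ===================== auxiliary development ===================== -/

section Aux

variable {V : Type*} {G : SimpleGraph V}

lemma mem_gInterval {u v w : V} :
    w ∈ gInterval G u v ↔ G.dist u w + G.dist w v = G.dist u v := Iff.rfl

lemma dcomm (G : SimpleGraph V) (u v : V) : G.dist u v = G.dist v u :=
  SimpleGraph.dist_comm

lemma dself (G : SimpleGraph V) (u : V) : G.dist u u = 0 := SimpleGraph.dist_self

lemma dtri (hc : G.Connected) (u v w : V) : G.dist u w ≤ G.dist u v + G.dist v w :=
  hc.dist_triangle

lemma dist_adj {a b : V} (h : G.Adj a b) : G.dist a b = 1 :=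
  dist_eq_one_iff_adj.mpr h

lemma adj_of_dist_one {p q : V} (h : G.dist p q = 1) : G.Adj p q :=
  dist_eq_one_iff_adj.mp h

lemma deq (hc : G.Connected) {u v : V} (h : G.dist u v = 0) : u = v :=
  hc.dist_eq_zero_iff.mp h

lemma ne_of_dist_to {t x y : V} (h : G.dist t x ≠ G.dist t y) : x ≠ y := by
  rintro rfl; exact h rfl

lemma ne_of_dist_pos {x y : V} (h : G.dist x y ≠ 0) : x ≠ y := by
  rintro rfl; exact h (dself G x)

lemma not_adj_of_dist_ne_one {x y : V} (h : G.dist x y ≠ 1) : ¬ G.Adj x y :=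
  fun h' => h (dist_adj h')

lemma adj_cases (hm : MedianGraph G) {p q : V} (h : G.Adj p q) (t : V) :
    G.dist t q = G.dist t p + 1 ∨ G.dist t p = G.dist t q + 1 := by
  have hc := hm.1
  obtain ⟨m, ⟨h1, h2, h3⟩, -⟩ := hm.2 p q t
  have hpq : G.dist p q = 1 := dist_adj h
  simp only [mem_gInterval] at h1 h2 h3
  rcases (by omega : G.dist p m = 0 ∨ G.dist m q = 0) with h0 | h0
  · have : p = m := deq hc h0
    subst this
    have c1 : G.dist q p = G.dist p q := dcomm G q p
    have c2 : G.dist p t = G.dist t p := dcomm G p t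
    have c3 : G.dist q t = G.dist t q := dcomm G q t
    omega
  · have : m = q := deq hc h0
    subst this
    have c1 : G.dist m p = G.dist p m := dcomm G m p
    have c2 : G.dist t m = G.dist m t := dcomm G t m
    omega

lemma not_adj_of_dist_eq (hm : MedianGraph G) {t x y : V}
    (h : G.dist t x = G.dist t y) : ¬ G.Adj x y := by
  intro h'
  rcases adj_cases hm h' t with h2 | h2 <;> omega

lemma step_toward (hc : G.Connected) {x y : V} {n : ℕ} (h : G.dist x y = n + 1) :
    ∃ x', G.Adj x x' ∧ G.dist x' y = n := by
  obtain ⟨p, hp⟩ := exists_walk_of_dist_ne_zero (show G.dist x y ≠ 0 by omega)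
  match p, hp with
  | .nil, hp => simp at hp; simp at h
  | .cons (v := w) ha q, hp =>
    have h1 : G.dist w y ≤ n := by
      have := SimpleGraph.dist_le q
      simp only [Walk.length_cons] at hp; omega
    have h2 : G.dist x y ≤ G.dist x w + G.dist w y := dtri hc x w y
    have h3 : G.dist x w = 1 := dist_adj ha
    exact ⟨w, ha, by omega⟩

lemma dist_parity (hm : MedianGraph G) (x y t : V) :
    (G.dist x y + G.dist x t + G.dist y t) % 2 = 0 := by
  have hc := hm.1
  obtain ⟨n, hn⟩ : ∃ n, G.dist x y = n := ⟨_, rfl⟩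
  induction n generalizing x with
  | zero =>
    have : x = y := deq hc hn
    subst this
    have := dself G x
    omega
  | succ n ih =>
    obtain ⟨x', hadj, hx'⟩ := step_toward hc hn
    have H := ih x' hx'
    have c1 : G.dist t x' = G.dist x' t := dcomm G t x'
    have c2 : G.dist t x = G.dist x t := dcomm G t x
    rcases adj_cases hm hadj t with h | h <;> omega

lemma dist_two_of (hm : MedianGraph G) {z a b : V} (ha : G.Adj z a) (hb : G.Adj z b)
    (hne : a ≠ b) : G.dist a b = 2 := by
  have hc := hm.1
  have h1 : G.dist a b ≤ G.dist a z + G.dist z b := dtri hc a z b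
  have h2 : G.dist a z = 1 := by rw [dcomm]; exact dist_adj ha
  have h3 : G.dist z b = 1 := dist_adj hb
  have h0 : G.dist a b ≠ 0 := fun h => hne (deq hc h)
  have hno : G.dist a b ≠ 1 := by
    intro h
    have h4 : G.dist z a = 1 := dist_adj ha
    rcases adj_cases hm (adj_of_dist_one h) z with h' | h' <;> omega
  omega

lemma mid3 (hm : MedianGraph G) {p q r : V} (hpq : G.dist p q = 2)
    (hqr : G.dist q r = 2) (hpr : G.dist p r = 2) :
    ∃ m, G.Adj p m ∧ G.Adj q m ∧ G.Adj r m := by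
  obtain ⟨m, ⟨h1, h2, h3⟩, -⟩ := hm.2 p q r
  simp only [mem_gInterval] at h1 h2 h3
  have c1 : G.dist m q = G.dist q m := dcomm G m q
  have c2 : G.dist m r = G.dist r m := dcomm G m r
  have c3 : G.dist r p = G.dist p r := dcomm G r p
  have c4 : G.dist m p = G.dist p m := dcomm G m p
  refine ⟨m, adj_of_dist_one ?_, adj_of_dist_one ?_, adj_of_dist_one ?_⟩ <;> omega

lemma med2 (hm : MedianGraph G) {x y u : V} (hxy : G.dist x y = 2)
    (h : G.dist u x = G.dist u y) :
    ∃ m, G.Adj x m ∧ G.Adj y m ∧ G.dist u m + 1 = G.dist u x := by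
  have hc := hm.1
  obtain ⟨m, ⟨h1, h2, h3⟩, -⟩ := hm.2 x y u
  simp only [mem_gInterval] at h1 h2 h3
  have hx0 : G.dist x m ≠ 0 := by
    intro h0
    have : x = m := deq hc h0
    subst this
    have c1 : G.dist y x = G.dist x y := dcomm G y x
    have c2 : G.dist x u = G.dist u x := dcomm G x u
    have c3 : G.dist y u = G.dist u y := dcomm G y u
    omega
  have hy0 : G.dist m y ≠ 0 := by
    intro h0
    have : m = y := deq hc h0
    subst this
    have c1 : G.dist m x = G.dist x m := dcomm G m x
    omega
  have c1 : G.dist m x = G.dist x m := dcomm G m x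
  have c2 : G.dist m y = G.dist y m := dcomm G m y
  refine ⟨m, adj_of_dist_one (by omega), adj_of_dist_one (by omega), by omega⟩

lemma mem_gInterval_of_adj (hm : MedianGraph G) {s p q : V} (hsp : G.Adj s p)
    (hsq : G.Adj s q) (hpq : p ≠ q) : s ∈ gInterval G p q := by
  have h1 : G.dist p s = 1 := by rw [dcomm]; exact dist_adj hsp
  have h2 : G.dist s q = 1 := dist_adj hsq
  have h3 : G.dist p q = 2 := dist_two_of hm hsp hsq hpq
  simp only [mem_gInterval]; omega

lemma K23 (hm : MedianGraph G) {s t p q r : V}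
    (hsp : G.Adj s p) (hsq : G.Adj s q) (hsr : G.Adj s r)
    (htp : G.Adj t p) (htq : G.Adj t q) (htr : G.Adj t r)
    (hpq : p ≠ q) (hpr : p ≠ r) (hqr : q ≠ r) : s = t := by
  obtain ⟨m, -, hu⟩ := hm.2 p q r
  have hs := hu s ⟨mem_gInterval_of_adj hm hsp hsq hpq,
    mem_gInterval_of_adj hm hsq hsr hqr, mem_gInterval_of_adj hm hsr hsp (Ne.symm hpr)⟩
  have ht := hu t ⟨mem_gInterval_of_adj hm htp htq hpq,
    mem_gInterval_of_adj hm htq htr hqr, mem_gInterval_of_adj hm htr htp (Ne.symm hpr)⟩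
  exact hs.trans ht.symm

end Aux

/- ===================== hypercube builders ===================== -/

section Cubes

variable {V : Type*} {G : SimpleGraph V}

def cubeMap1 (z v : V) : Finset (Fin 1) → V := fun A => if 0 ∈ A then v else z

def cubeMap2 (z a b v : V) : Finset (Fin 2) → V := fun A =>
  if 0 ∈ A then (if 1 ∈ A then v else a) else (if 1 ∈ A then b else z)

def cubeMap3 (v0 v1 v2 v3 v4 v5 v6 v7 : V) : Finset (Fin 3) → V := fun A =>
  if 0 ∈ A then
    (if 1 ∈ A then (if 2 ∈ A then v7 else v6) else (if 2 ∈ A then v5 else v4))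
  else
    (if 1 ∈ A then (if 2 ∈ A then v3 else v2) else (if 2 ∈ A then v1 else v0))

lemma finset1_cases : ∀ A : Finset (Fin 1), A = ∅ ∨ A = {0} := by decide

lemma finset2_cases : ∀ A : Finset (Fin 2), A = ∅ ∨ A = {0} ∨ A = {1} ∨ A = {0,1} := by
  decide

lemma finset3_cases : ∀ A : Finset (Fin 3),
    A = ∅ ∨ A = {0} ∨ A = {1} ∨ A = {2} ∨ A = {0,1} ∨ A = {0,2} ∨ A = {1,2} ∨ A = {0,1,2} := by
  decide

@[simp] lemma cubeMap1_e (z v : V) : cubeMap1 z v (∅ : Finset (Fin 1)) = z := rfl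
@[simp] lemma cubeMap1_0 (z v : V) : cubeMap1 z v ({0} : Finset (Fin 1)) = v := rfl

section
variable (z a b v : V)
@[simp] lemma cubeMap2_e : cubeMap2 z a b v (∅ : Finset (Fin 2)) = z := rfl
@[simp] lemma cubeMap2_0 : cubeMap2 z a b v ({0} : Finset (Fin 2)) = a := rfl
@[simp] lemma cubeMap2_1 : cubeMap2 z a b v ({1} : Finset (Fin 2)) = b := rfl
@[simp] lemma cubeMap2_01 : cubeMap2 z a b v ({0,1} : Finset (Fin 2)) = v := rfl
end

section
variable (v0 v1 v2 v3 v4 v5 v6 v7 : V)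
@[simp] lemma cubeMap3_e : cubeMap3 v0 v1 v2 v3 v4 v5 v6 v7 (∅ : Finset (Fin 3)) = v0 := rfl
@[simp] lemma cubeMap3_2 : cubeMap3 v0 v1 v2 v3 v4 v5 v6 v7 ({2} : Finset (Fin 3)) = v1 := rfl
@[simp] lemma cubeMap3_1 : cubeMap3 v0 v1 v2 v3 v4 v5 v6 v7 ({1} : Finset (Fin 3)) = v2 := rfl
@[simp] lemma cubeMap3_12 : cubeMap3 v0 v1 v2 v3 v4 v5 v6 v7 ({1,2} : Finset (Fin 3)) = v3 := rfl
@[simp] lemma cubeMap3_0 : cubeMap3 v0 v1 v2 v3 v4 v5 v6 v7 ({0} : Finset (Fin 3)) = v4 := rfl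
@[simp] lemma cubeMap3_02 : cubeMap3 v0 v1 v2 v3 v4 v5 v6 v7 ({0,2} : Finset (Fin 3)) = v5 := rfl
@[simp] lemma cubeMap3_01 : cubeMap3 v0 v1 v2 v3 v4 v5 v6 v7 ({0,1} : Finset (Fin 3)) = v6 := rfl
@[simp] lemma cubeMap3_012 : cubeMap3 v0 v1 v2 v3 v4 v5 v6 v7 ({0,1,2} : Finset (Fin 3)) = v7 := rfl
end

set_option maxHeartbeats 4000000 in
lemma cube3_of (v0 v1 v2 v3 v4 v5 v6 v7 : V)
    (e01 : G.Adj v0 v1) (e02 : G.Adj v0 v2) (e04 : G.Adj v0 v4)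
    (e13 : G.Adj v1 v3) (e15 : G.Adj v1 v5)
    (e23 : G.Adj v2 v3) (e26 : G.Adj v2 v6)
    (e45 : G.Adj v4 v5) (e46 : G.Adj v4 v6)
    (e37 : G.Adj v3 v7) (e57 : G.Adj v5 v7) (e67 : G.Adj v6 v7)
    (n03 : ¬ G.Adj v0 v3) (d03 : v0 ≠ v3)
    (n05 : ¬ G.Adj v0 v5) (d05 : v0 ≠ v5)
    (n06 : ¬ G.Adj v0 v6) (d06 : v0 ≠ v6)
    (n12 : ¬ G.Adj v1 v2) (d12 : v1 ≠ v2)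
    (n14 : ¬ G.Adj v1 v4) (d14 : v1 ≠ v4)
    (n17 : ¬ G.Adj v1 v7) (d17 : v1 ≠ v7)
    (n24 : ¬ G.Adj v2 v4) (d24 : v2 ≠ v4)
    (n27 : ¬ G.Adj v2 v7) (d27 : v2 ≠ v7)
    (n47 : ¬ G.Adj v4 v7) (d47 : v4 ≠ v7)
    (n35 : ¬ G.Adj v3 v5) (d35 : v3 ≠ v5)
    (n36 : ¬ G.Adj v3 v6) (d36 : v3 ≠ v6)
    (n56 : ¬ G.Adj v5 v6) (d56 : v5 ≠ v6)
    (n07 : ¬ G.Adj v0 v7) (d07 : v0 ≠ v7)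
    (n16 : ¬ G.Adj v1 v6) (d16 : v1 ≠ v6)
    (n25 : ¬ G.Adj v2 v5) (d25 : v2 ≠ v5)
    (n34 : ¬ G.Adj v3 v4) (d34 : v3 ≠ v4) :
    HasInducedCube G 3 := by
  refine ⟨cubeMap3 v0 v1 v2 v3 v4 v5 v6 v7, ?_, fun A => Set.mem_univ _, ?_⟩
  · intro A B
    rcases finset3_cases A with rfl|rfl|rfl|rfl|rfl|rfl|rfl|rfl <;>
      rcases finset3_cases B with rfl|rfl|rfl|rfl|rfl|rfl|rfl|rfl <;>
      simp only [cubeMap3_e, cubeMap3_0, cubeMap3_1, cubeMap3_2, cubeMap3_01, cubeMap3_02,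
        cubeMap3_12, cubeMap3_012] <;>
      intro hAB <;>
      first
        | rfl
        | trivial
        | exact absurd hAB d03 | exact absurd hAB d05 | exact absurd hAB d06
        | exact absurd hAB d12 | exact absurd hAB d14 | exact absurd hAB d17
        | exact absurd hAB d24 | exact absurd hAB d27 | exact absurd hAB d47
        | exact absurd hAB d35 | exact absurd hAB d36 | exact absurd hAB d56
        | exact absurd hAB d07 | exact absurd hAB d16 | exact absurd hAB d25
        | exact absurd hAB d34
        | exact absurd hAB.symm d03 | exact absurd hAB.symm d05 | exact absurd hAB.symm d06
        | exact absurd hAB.symm d12 | exact absurd hAB.symm d14 | exact absurd hAB.symm d17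
        | exact absurd hAB.symm d24 | exact absurd hAB.symm d27 | exact absurd hAB.symm d47
        | exact absurd hAB.symm d35 | exact absurd hAB.symm d36 | exact absurd hAB.symm d56
        | exact absurd hAB.symm d07 | exact absurd hAB.symm d16 | exact absurd hAB.symm d25
        | exact absurd hAB.symm d34
        | exact absurd hAB e01.ne | exact absurd hAB e02.ne | exact absurd hAB e04.ne
        | exact absurd hAB e13.ne | exact absurd hAB e15.ne | exact absurd hAB e23.ne
        | exact absurd hAB e26.ne | exact absurd hAB e45.ne | exact absurd hAB e46.ne
        | exact absurd hAB e37.ne | exact absurd hAB e57.ne | exact absurd hAB e67.ne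
        | exact absurd hAB.symm e01.ne | exact absurd hAB.symm e02.ne | exact absurd hAB.symm e04.ne
        | exact absurd hAB.symm e13.ne | exact absurd hAB.symm e15.ne | exact absurd hAB.symm e23.ne
        | exact absurd hAB.symm e26.ne | exact absurd hAB.symm e45.ne | exact absurd hAB.symm e46.ne
        | exact absurd hAB.symm e37.ne | exact absurd hAB.symm e57.ne | exact absurd hAB.symm e67.ne
  · intro A B
    rcases finset3_cases A with rfl|rfl|rfl|rfl|rfl|rfl|rfl|rfl <;>
      rcases finset3_cases B with rfl|rfl|rfl|rfl|rfl|rfl|rfl|rfl <;>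
      simp only [cubeMap3_e, cubeMap3_0, cubeMap3_1, cubeMap3_2, cubeMap3_01, cubeMap3_02,
        cubeMap3_12, cubeMap3_012] <;>
      first
        | exact iff_of_true e01 (by decide) | exact iff_of_true e02 (by decide)
        | exact iff_of_true e04 (by decide) | exact iff_of_true e13 (by decide)
        | exact iff_of_true e15 (by decide) | exact iff_of_true e23 (by decide)
        | exact iff_of_true e26 (by decide) | exact iff_of_true e45 (by decide)
        | exact iff_of_true e46 (by decide) | exact iff_of_true e37 (by decide)
        | exact iff_of_true e57 (by decide) | exact iff_of_true e67 (by decide)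
        | exact iff_of_true (G.adj_symm e01) (by decide) | exact iff_of_true (G.adj_symm e02) (by decide)
        | exact iff_of_true (G.adj_symm e04) (by decide) | exact iff_of_true (G.adj_symm e13) (by decide)
        | exact iff_of_true (G.adj_symm e15) (by decide) | exact iff_of_true (G.adj_symm e23) (by decide)
        | exact iff_of_true (G.adj_symm e26) (by decide) | exact iff_of_true (G.adj_symm e45) (by decide)
        | exact iff_of_true (G.adj_symm e46) (by decide) | exact iff_of_true (G.adj_symm e37) (by decide)
        | exact iff_of_true (G.adj_symm e57) (by decide) | exact iff_of_true (G.adj_symm e67) (by decide)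
        | exact iff_of_false (G.irrefl) (by decide)
        | exact iff_of_false n03 (by decide) | exact iff_of_false n05 (by decide)
        | exact iff_of_false n06 (by decide) | exact iff_of_false n12 (by decide)
        | exact iff_of_false n14 (by decide) | exact iff_of_false n17 (by decide)
        | exact iff_of_false n24 (by decide) | exact iff_of_false n27 (by decide)
        | exact iff_of_false n47 (by decide) | exact iff_of_false n35 (by decide)
        | exact iff_of_false n36 (by decide) | exact iff_of_false n56 (by decide)
        | exact iff_of_false n07 (by decide) | exact iff_of_false n16 (by decide)
        | exact iff_of_false n25 (by decide) | exact iff_of_false n34 (by decide)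
        | exact iff_of_false (fun h => n03 (G.adj_symm h)) (by decide)
        | exact iff_of_false (fun h => n05 (G.adj_symm h)) (by decide)
        | exact iff_of_false (fun h => n06 (G.adj_symm h)) (by decide)
        | exact iff_of_false (fun h => n12 (G.adj_symm h)) (by decide)
        | exact iff_of_false (fun h => n14 (G.adj_symm h)) (by decide)
        | exact iff_of_false (fun h => n17 (G.adj_symm h)) (by decide)
        | exact iff_of_false (fun h => n24 (G.adj_symm h)) (by decide)
        | exact iff_of_false (fun h => n27 (G.adj_symm h)) (by decide)
        | exact iff_of_false (fun h => n47 (G.adj_symm h)) (by decide)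
        | exact iff_of_false (fun h => n35 (G.adj_symm h)) (by decide)
        | exact iff_of_false (fun h => n36 (G.adj_symm h)) (by decide)
        | exact iff_of_false (fun h => n56 (G.adj_symm h)) (by decide)
        | exact iff_of_false (fun h => n07 (G.adj_symm h)) (by decide)
        | exact iff_of_false (fun h => n16 (G.adj_symm h)) (by decide)
        | exact iff_of_false (fun h => n25 (G.adj_symm h)) (by decide)
        | exact iff_of_false (fun h => n34 (G.adj_symm h)) (by decide)

end Cubes

/- ===================== star characterization ===================== -/

section Star

variable {V : Type*} {G : SimpleGraph V}

lemma symmCancel {α : Type*} [DecidableEq α] (X S T : Finset α) :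
    symmDiff (symmDiff X S) (symmDiff X T) = symmDiff S T := by
  rw [symmDiff_comm X S, symmDiff_assoc, symmDiff_symmDiff_cancel_left]

lemma pair_symmDiff {α : Type*} [DecidableEq α] {i j : α} (h : i ≠ j) :
    ({i, j} : Finset α) = symmDiff {i} {j} := by
  rw [Disjoint.symmDiff_eq_sup (by simpa using h)]
  rfl

def StarPt (G : SimpleGraph V) (z v : V) : Prop :=
  v = z ∨ G.Adj z v ∨ (z ≠ v ∧ ¬G.Adj z v ∧
    ∃ a b, a ≠ b ∧ G.Adj z a ∧ G.Adj a v ∧ G.Adj z b ∧ G.Adj b v)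

lemma self_mem_star (z : V) : z ∈ gStar G z := by
  refine ⟨0, fun _ => z, fun A B _ => by ext i; exact i.elim0, fun A B => ?_, ⟨∅, rfl⟩, ⟨∅, rfl⟩⟩
  have : A = B := by ext i; exact i.elim0
  subst this
  simp [symmDiff_self]

lemma adj_mem_star {z v : V} (h : G.Adj z v) : v ∈ gStar G z := by
  refine ⟨1, cubeMap1 z v, ?_, ?_, ⟨∅, rfl⟩, ⟨{0}, cubeMap1_0 z v⟩⟩
  · intro A B hAB
    rcases finset1_cases A with rfl | rfl <;> rcases finset1_cases B with rfl | rfl <;>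
      simp only [cubeMap1_e, cubeMap1_0] at hAB ⊢ <;>
      first
        | rfl
        | exact absurd hAB h.ne
        | exact absurd hAB.symm h.ne
  · intro A B
    rcases finset1_cases A with rfl | rfl <;> rcases finset1_cases B with rfl | rfl <;>
      simp only [cubeMap1_e, cubeMap1_0] <;>
      first
        | exact iff_of_false (G.irrefl) (by decide)
        | exact iff_of_true h (by decide)
        | exact iff_of_true (G.adj_symm h) (by decide)

lemma square_mem_star {z a b v : V} (hza : G.Adj z a) (hav : G.Adj a v)
    (hzb : G.Adj z b) (hbv : G.Adj b v) (hab : a ≠ b) (hnab : ¬ G.Adj a b)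
    (hzv : z ≠ v) (hnzv : ¬ G.Adj z v) : v ∈ gStar G z := by
  refine ⟨2, cubeMap2 z a b v, ?_, ?_, ⟨∅, rfl⟩, ⟨{0,1}, cubeMap2_01 z a b v⟩⟩
  · intro A B hAB
    rcases finset2_cases A with rfl | rfl | rfl | rfl <;>
      rcases finset2_cases B with rfl | rfl | rfl | rfl <;>
      simp only [cubeMap2_e, cubeMap2_0, cubeMap2_1, cubeMap2_01] at hAB ⊢ <;>
      first
        | rfl
        | exact absurd hAB hza.ne | exact absurd hAB.symm hza.ne
        | exact absurd hAB hzb.ne | exact absurd hAB.symm hzb.ne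
        | exact absurd hAB hzv | exact absurd hAB.symm hzv
        | exact absurd hAB hab | exact absurd hAB.symm hab
        | exact absurd hAB.symm hav.ne | exact absurd hAB hav.ne
        | exact absurd hAB.symm hbv.ne | exact absurd hAB hbv.ne
  · intro A B
    rcases finset2_cases A with rfl | rfl | rfl | rfl <;>
      rcases finset2_cases B with rfl | rfl | rfl | rfl <;>
      simp only [cubeMap2_e, cubeMap2_0, cubeMap2_1, cubeMap2_01] <;>
      first
        | exact iff_of_false (G.irrefl) (by decide)
        | exact iff_of_true hza (by decide) | exact iff_of_true (G.adj_symm hza) (by decide)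
        | exact iff_of_true hzb (by decide) | exact iff_of_true (G.adj_symm hzb) (by decide)
        | exact iff_of_true hav (by decide) | exact iff_of_true (G.adj_symm hav) (by decide)
        | exact iff_of_true hbv (by decide) | exact iff_of_true (G.adj_symm hbv) (by decide)
        | exact iff_of_false hnzv (by decide)
        | exact iff_of_false (fun h' => hnzv (G.adj_symm h')) (by decide)
        | exact iff_of_false hnab (by decide)
        | exact iff_of_false (fun h' => hnab (G.adj_symm h')) (by decide)

lemma starPt_of_mem (hcf : CubeFree G) {z v : V} (h : v ∈ gStar G z) :
    StarPt G z v := by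
  obtain ⟨d, f, hinj, hadj, ⟨A0, hA0⟩, ⟨A1, hA1⟩⟩ := h
  by_cases h0 : A0 = A1
  · left; rw [← hA0, ← hA1, h0]
  have hcard0 : (symmDiff A0 A1).card ≠ 0 := by
    simp only [ne_eq, Finset.card_eq_zero]
    exact fun hh => h0 (symmDiff_eq_bot.mp hh)
  rcases lt_or_ge (symmDiff A0 A1).card 2 with hk | hk
  · right; left
    rw [← hA0, ← hA1]
    exact (hadj A0 A1).mpr (by omega)
  rcases lt_or_ge (symmDiff A0 A1).card 3 with hk3 | hk3
  · right; right
    obtain ⟨i, j, hij, hpair⟩ := Finset.card_eq_two.mp (by omega : (symmDiff A0 A1).card = 2)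
    have hA1' : A1 = symmDiff A0 {i, j} := by
      rw [← hpair, symmDiff_symmDiff_cancel_left]
    have hzv : z ≠ v := by
      intro h
      exact h0 (hinj (hA0.trans (h ▸ hA1.symm)))
    have hnzv : ¬ G.Adj z v := by
      rw [← hA0, ← hA1, hadj, hpair]
      rw [Finset.card_pair hij]
      omega
    refine ⟨hzv, hnzv, f (symmDiff A0 {i}), f (symmDiff A0 {j}), ?_, ?_, ?_, ?_, ?_⟩
    · intro h
      have h2 := hinj h
      have : ({i} : Finset (Fin d)) = {j} := by
        rw [← symmDiff_symmDiff_cancel_left A0 {i}, h2, symmDiff_symmDiff_cancel_left]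
      exact hij (Finset.singleton_injective this)
    · rw [← hA0, hadj, symmDiff_symmDiff_cancel_left]
      exact Finset.card_singleton i
    · rw [← hA1, hadj, hA1', symmCancel, pair_symmDiff hij, symmDiff_symmDiff_cancel_left]
      exact Finset.card_singleton j
    · rw [← hA0, hadj, symmDiff_symmDiff_cancel_left]
      exact Finset.card_singleton j
    · rw [← hA1, hadj, hA1', symmCancel, pair_symmDiff hij, symmDiff_comm ({i} : Finset (Fin d)),
        symmDiff_symmDiff_cancel_left]
      exact Finset.card_singleton i
  · exfalso
    apply hcf
    obtain ⟨i, -, j, -, l, -, hij, hil, hjl⟩ :=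
      (Finset.two_lt_card (s := symmDiff A0 A1)).mp (by omega)
    have einj : Function.Injective ![i, j, l] := by
      intro a b hab
      fin_cases a <;> fin_cases b <;> simp_all
    refine ⟨fun B => f (symmDiff A0 (B.image ![i, j, l])), ?_, fun _ => Set.mem_univ _, ?_⟩
    · intro B B' h
      have h2 := hinj h
      have h3 : B.image ![i, j, l] = B'.image ![i, j, l] := by
        rw [← symmDiff_symmDiff_cancel_left A0 (B.image ![i, j, l]), h2,
          symmDiff_symmDiff_cancel_left]
      exact Finset.image_injective einj h3
    · intro B B'
      rw [hadj, symmCancel, ← Finset.image_symmDiff _ _ einj,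
        Finset.card_image_of_injective _ einj]

lemma mem_star_iff (hm : MedianGraph G) (hcf : CubeFree G) {z v : V} :
    v ∈ gStar G z ↔ StarPt G z v := by
  constructor
  · exact starPt_of_mem hcf
  · rintro (rfl | h | ⟨hzv, hnzv, a, b, hab, hza, hav, hzb, hbv⟩)
    · exact self_mem_star v
    · exact adj_mem_star h
    · exact square_mem_star hza hav hzb hbv hab
        (not_adj_of_dist_eq hm (by rw [dist_adj hza, dist_adj hzb])) hzv hnzv

end Star

/- ===================== cube-free forbidden configurations ===================== -/

section Forbidden

variable {V : Type*} {G : SimpleGraph V}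

lemma sq_dist (hm : MedianGraph G) {z v a : V} (hzv : z ≠ v) (hnzv : ¬ G.Adj z v)
    (hza : G.Adj z a) (hav : G.Adj a v) : G.dist z v = 2 := by
  have hc := hm.1
  have h1 := dtri hc z a v
  have h2 := dist_adj hza
  have h3 := dist_adj hav
  have h0 : G.dist z v ≠ 0 := fun h => hzv (deq hc h)
  have h4 : G.dist z v ≠ 1 := fun h => hnzv (adj_of_dist_one h)
  omega

lemma square_corner (hm : MedianGraph G) {z s p q e : V}
    (hzp : G.Adj z p) (hps : G.Adj p s) (hzq : G.Adj z q) (hqs : G.Adj q s)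
    (hpq : p ≠ q) (hzs : z ≠ s) (hze : G.Adj z e) (hes : G.Adj e s) :
    e = p ∨ e = q := by
  by_contra hcon
  push_neg at hcon
  exact hzs (K23 hm hzp hzq hze (G.adj_symm hps) (G.adj_symm hqs) (G.adj_symm hes) hpq
    (Ne.symm hcon.1) (Ne.symm hcon.2))

lemma L1core (hm : MedianGraph G) (hcf : CubeFree G) {z a p q b c w : V}
    (hza : G.Adj z a) (hzp : G.Adj z p) (hpb : G.Adj p b)
    (hzq : G.Adj z q) (hqb : G.Adj q b) (hpq : p ≠ q)
    (hzw : G.dist z w = 3) (hwb : G.Adj w b) (haw : G.dist a w = 2)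
    (hab : G.dist a b = 3) (dzb : G.dist z b = 2)
    (hac : G.Adj a c) (hcw : G.Adj c w) (dzc : G.dist z c = 2)
    (hpc : G.Adj p c) : False := by
  have hc := hm.1
  have dza : G.dist z a = 1 := dist_adj hza
  have dzp : G.dist z p = 1 := dist_adj hzp
  have dzq : G.dist z q = 1 := dist_adj hzq
  have hap : a ≠ p := by rintro rfl; rw [dist_adj hpb] at hab; omega
  have haq : a ≠ q := by rintro rfl; rw [dist_adj hqb] at hab; omega
  have daq : G.dist a q = 2 := dist_two_of hm hza hzq haq
  have dqw : G.dist q w = 2 := by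
    have h1 := dtri hc q b w
    have h2 := dtri hc z q w
    have h3 : G.dist q b = 1 := dist_adj hqb
    have h4 : G.dist b w = 1 := by rw [dcomm]; exact dist_adj hwb
    omega
  obtain ⟨t, hat, hqt, hwt⟩ := mid3 hm daq dqw haw
  have hzt_ne : z ≠ t := by
    rintro rfl
    rw [dist_adj (G.adj_symm hwt)] at hzw
    omega
  have dzt : G.dist z t = 2 := by
    rcases adj_cases hm hat z with h | h
    · rw [dza] at h; exact h
    · rw [dza] at h
      exact absurd (deq hc (by omega)) hzt_ne
  have hbt : b ≠ t := by rintro rfl; rw [dist_adj hat] at hab; omega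
  have hbc : b ≠ c := by rintro rfl; rw [dist_adj hac] at hab; omega
  have htc : t ≠ c := by
    intro h
    have hqc : G.Adj q c := h ▸ hqt
    have := K23 hm hza hzp hzq (G.adj_symm hac) (G.adj_symm hpc) (G.adj_symm hqc) hap haq hpq
    exact (ne_of_dist_to (by rw [dself, dzc]; omega)) this
  have n16 : ¬ G.Adj q c := by
    intro h
    have := K23 hm hza hzp hzq (G.adj_symm hac) (G.adj_symm hpc) (G.adj_symm h) hap haq hpq
    exact (ne_of_dist_to (by rw [dself, dzc]; omega)) this
  have n25 : ¬ G.Adj p t := by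
    intro h
    have := K23 hm hza hzq hzp (G.adj_symm hat) (G.adj_symm hqt) (G.adj_symm h) haq hap (Ne.symm hpq)
    exact (ne_of_dist_to (by rw [dself, dzt]; omega)) this
  have n17 : ¬ G.Adj q w := by
    intro h
    have h1 := dtri hc z q w
    rw [dzq, dist_adj h] at h1
    omega
  have n27 : ¬ G.Adj p w := by
    intro h
    have h1 := dtri hc z p w
    rw [dzp, dist_adj h] at h1
    omega
  exact hcf (cube3_of z q p b a t c w
    hzq hzp hza hqb hqt hpb hpc hat hac (G.adj_symm hwb) (G.adj_symm hwt) hcw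
    (not_adj_of_dist_ne_one (by rw [dzb]; omega)) (ne_of_dist_to (by rw [dself, dzb]; omega))
    (not_adj_of_dist_ne_one (by rw [dzt]; omega)) (ne_of_dist_to (by rw [dself, dzt]; omega))
    (not_adj_of_dist_ne_one (by rw [dzc]; omega)) (ne_of_dist_to (by rw [dself, dzc]; omega))
    (not_adj_of_dist_eq hm (by rw [dzq, dzp])) (Ne.symm hpq)
    (not_adj_of_dist_eq hm (by rw [dzq, dza])) (Ne.symm haq)
    n17 (ne_of_dist_to (by rw [dzq, hzw]; omega))
    (not_adj_of_dist_eq hm (by rw [dzp, dza])) (Ne.symm hap)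
    n27 (ne_of_dist_to (by rw [dzp, hzw]; omega))
    (not_adj_of_dist_ne_one (by rw [haw]; omega)) (ne_of_dist_pos (by rw [haw]; omega))
    (not_adj_of_dist_eq hm (by rw [dzb, dzt])) hbt
    (not_adj_of_dist_eq hm (by rw [dzb, dzc])) hbc
    (not_adj_of_dist_eq hm (by rw [dzt, dzc])) htc
    (not_adj_of_dist_ne_one (by rw [hzw]; omega)) (ne_of_dist_pos (by rw [hzw]; omega))
    n16 (ne_of_dist_to (by rw [dzq, dzc]; omega))
    n25 (ne_of_dist_to (by rw [dzp, dzt]; omega))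
    (not_adj_of_dist_ne_one (by rw [dcomm, hab]; omega))
    (Ne.symm (ne_of_dist_pos (by rw [hab]; omega))))

lemma L1 (hm : MedianGraph G) (hcf : CubeFree G) {z a p q b w : V}
    (hza : G.Adj z a) (hzp : G.Adj z p) (hpb : G.Adj p b)
    (hzq : G.Adj z q) (hqb : G.Adj q b) (hpq : p ≠ q)
    (hzw : G.dist z w = 3) (hwb : G.Adj w b) (haw : G.dist a w = 2)
    (hab : G.dist a b = 3) : False := by
  have hc := hm.1
  have hzb_ne : z ≠ b := by
    rintro rfl
    rw [dist_adj (G.adj_symm hwb)] at hzw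
    omega
  have dzb : G.dist z b = 2 := dist_two_of hm (G.adj_symm hzp) hpb hzb_ne
  obtain ⟨c, hac, hcw1⟩ := step_toward hc (by omega : G.dist a w = 1 + 1)
  have hcw : G.Adj c w := adj_of_dist_one hcw1
  have dza := dist_adj hza
  have dzc : G.dist z c = 2 := by
    rcases adj_cases hm hac z with h | h
    · rw [dza] at h; exact h
    · rw [dza] at h
      have hzc : z = c := deq hc (by omega)
      rw [dist_adj (hzc ▸ hcw)] at hzw
      omega
  have hbc : b ≠ c := by rintro rfl; rw [dist_adj hac] at hab; omega
  have hnbc : ¬ G.Adj b c := not_adj_of_dist_eq hm (by rw [dzb, dzc])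
  have dbc : G.dist b c = 2 := by
    have h1 := dtri hc b w c
    have h2 : G.dist b w = 1 := by rw [dcomm]; exact dist_adj hwb
    have h3 : G.dist w c = 1 := by rw [dcomm]; exact dist_adj hcw
    have h0 : G.dist b c ≠ 0 := fun hh => hbc (deq hc hh)
    have h4 : G.dist b c ≠ 1 := fun hh => hnbc (adj_of_dist_one hh)
    omega
  obtain ⟨e, heb, hec, hez⟩ := med2 hm dbc (by rw [dzb, dzc])
  have hze : G.Adj z e := adj_of_dist_one (by omega)
  rcases square_corner hm hzp hpb hzq hqb hpq hzb_ne hze (G.adj_symm heb) with rfl | rfl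
  · exact L1core hm hcf hza hzp hpb hzq hqb hpq hzw hwb haw hab dzb hac hcw dzc (G.adj_symm hec)
  · exact L1core hm hcf hza hzq hqb hzp hpb (Ne.symm hpq) hzw hwb haw hab dzb hac hcw dzc
      (G.adj_symm hec)

lemma L2 (hm : MedianGraph G) (hcf : CubeFree G) {z a p q b w : V}
    (hzp : G.Adj z p) (hpa : G.Adj p a) (hzq : G.Adj z q) (hqa : G.Adj q a)
    (hpq : p ≠ q) (dzb : G.dist z b = 2) (hzw : G.dist z w = 3)
    (haw : G.Adj a w) (hwb : G.dist w b = 3) (hab : G.dist a b = 4) : False := by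
  have hc := hm.1
  obtain ⟨m, ⟨h1, h2, h3⟩, -⟩ := hm.2 z b w
  simp only [mem_gInterval] at h1 h2 h3
  have c1 : G.dist b m = G.dist m b := dcomm G b m
  have c2 : G.dist w m = G.dist m w := dcomm G w m
  have c3 : G.dist m z = G.dist z m := dcomm G m z
  have c4 : G.dist b w = G.dist w b := dcomm G b w
  have c5 : G.dist w z = G.dist z w := dcomm G w z
  have hzm : G.dist z m = 1 := by omega
  have hmb : G.dist m b = 1 := by omega
  have hmw : G.dist m w = 2 := by omega
  have hma : G.dist m a = 3 := by
    have t1 := dtri hc a m b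
    have t2 := dtri hc m w a
    have tw : G.dist w a = 1 := by rw [dcomm]; exact dist_adj haw
    have c6 : G.dist a m = G.dist m a := dcomm G a m
    omega
  exact L1 hm hcf (adj_of_dist_one hzm) hzp hpa hzq hqa hpq hzw (G.adj_symm haw) hmw hma

lemma L3core (hm : MedianGraph G) (hcf : CubeFree G) {z p a' b' a b w : V}
    (hzp : G.Adj z p) (hpa : G.Adj p a) (hpb : G.Adj p b)
    (hza' : G.Adj z a') (ha'a : G.Adj a' a) (hzb' : G.Adj z b') (hb'b : G.Adj b' b)
    (hap' : a' ≠ p) (hbp' : b' ≠ p) (ha'b' : a' ≠ b')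
    (hab : G.dist a b = 2) (hwa : G.Adj w a) (hwb : G.Adj w b)
    (hzw : G.dist z w = 3) : False := by
  have hc := hm.1
  have dzp := dist_adj hzp
  have dza' := dist_adj hza'
  have dzb' := dist_adj hzb'
  have hza_ne : z ≠ a := by
    rintro rfl; rw [dist_adj (G.adj_symm hwa)] at hzw; omega
  have hzb_ne : z ≠ b := by
    rintro rfl; rw [dist_adj (G.adj_symm hwb)] at hzw; omega
  have dza : G.dist z a = 2 := dist_two_of hm (G.adj_symm hzp) hpa hza_ne
  have dzb : G.dist z b = 2 := dist_two_of hm (G.adj_symm hzp) hpb hzb_ne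
  have dwa' : G.dist a' w = 2 := by
    have t1 := dtri hc a' a w
    have t2 := dtri hc z a' w
    have e1 : G.dist a' a = 1 := dist_adj ha'a
    have e2 : G.dist a w = 1 := by rw [dcomm]; exact dist_adj hwa
    omega
  have dwb' : G.dist b' w = 2 := by
    have t1 := dtri hc b' b w
    have t2 := dtri hc z b' w
    have e1 : G.dist b' b = 1 := dist_adj hb'b
    have e2 : G.dist b w = 1 := by rw [dcomm]; exact dist_adj hwb
    omega
  have da'b' : G.dist a' b' = 2 := dist_two_of hm hza' hzb' ha'b'
  obtain ⟨t, ha't, hb't, hwt⟩ := mid3 hm da'b' dwb' dwa'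
  have hzt_ne : z ≠ t := by
    rintro rfl; rw [dist_adj (G.adj_symm hwt)] at hzw; omega
  have dzt : G.dist z t = 2 := by
    rcases adj_cases hm ha't z with h | h
    · rw [dza'] at h; exact h
    · rw [dza'] at h
      exact absurd (deq hc (by omega)) hzt_ne
  have nb'a : ¬ G.Adj b' a := by
    intro h
    have := K23 hm hzp hza' hzb' (G.adj_symm hpa) (G.adj_symm ha'a) (G.adj_symm h)
      (Ne.symm hap') (Ne.symm hbp') ha'b'
    exact hza_ne this
  have na'b : ¬ G.Adj a' b := by
    intro h
    have := K23 hm hzp hzb' hza' (G.adj_symm hpb) (G.adj_symm hb'b) (G.adj_symm h)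
      (Ne.symm hbp') (Ne.symm hap') (Ne.symm ha'b')
    exact hzb_ne this
  have npt : ¬ G.Adj p t := by
    intro h
    have := K23 hm hza' hzb' hzp (G.adj_symm ha't) (G.adj_symm hb't) (G.adj_symm h)
      ha'b' hap' hbp'
    exact hzt_ne this
  have hbt : b ≠ t := by
    intro h
    exact na'b (h ▸ ha't)
  have hat : a ≠ t := by
    intro h
    exact nb'a (h ▸ hb't)
  have n17 : ¬ G.Adj b' w := not_adj_of_dist_ne_one (by rw [dwb']; omega)
  have n27 : ¬ G.Adj p w := by
    intro h
    have h1 := dtri hc z p w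
    rw [dzp, dist_adj h] at h1
    omega
  exact hcf (cube3_of z b' p b a' t a w
    hzb' hzp hza' hb'b hb't hpb hpa ha't ha'a (G.adj_symm hwb) (G.adj_symm hwt) (G.adj_symm hwa)
    (not_adj_of_dist_ne_one (by rw [dzb]; omega)) (ne_of_dist_to (by rw [dself, dzb]; omega))
    (not_adj_of_dist_ne_one (by rw [dzt]; omega)) (ne_of_dist_to (by rw [dself, dzt]; omega))
    (not_adj_of_dist_ne_one (by rw [dza]; omega)) (ne_of_dist_to (by rw [dself, dza]; omega))
    (not_adj_of_dist_eq hm (by rw [dzb', dzp])) hbp'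
    (not_adj_of_dist_eq hm (by rw [dzb', dza'])) (Ne.symm ha'b')
    n17 (ne_of_dist_to (by rw [dzb', hzw]; omega))
    (not_adj_of_dist_eq hm (by rw [dzp, dza'])) (Ne.symm hap')
    n27 (ne_of_dist_to (by rw [dzp, hzw]; omega))
    (not_adj_of_dist_ne_one (by rw [dwa']; omega))
    (ne_of_dist_to (by rw [dza', hzw]; omega))
    (not_adj_of_dist_eq hm (by rw [dzb, dzt])) hbt
    (not_adj_of_dist_eq hm (by rw [dzb, dza]))
    (Ne.symm (ne_of_dist_pos (by rw [hab]; omega)))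
    (not_adj_of_dist_eq hm (by rw [dzt, dza])) (Ne.symm hat)
    (not_adj_of_dist_ne_one (by rw [hzw]; omega)) (ne_of_dist_pos (by rw [hzw]; omega))
    nb'a (ne_of_dist_to (by rw [dzb', dza]; omega))
    npt (ne_of_dist_to (by rw [dzp, dzt]; omega))
    (fun h => na'b (G.adj_symm h)) (ne_of_dist_to (by rw [dzb, dza']; omega)))

lemma L3 (hm : MedianGraph G) (hcf : CubeFree G) {z a b pa qa pb qb w : V}
    (hzpa : G.Adj z pa) (hpaa : G.Adj pa a) (hzqa : G.Adj z qa) (hqaa : G.Adj qa a)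
    (hpqa : pa ≠ qa)
    (hzpb : G.Adj z pb) (hpbb : G.Adj pb b) (hzqb : G.Adj z qb) (hqbb : G.Adj qb b)
    (hpqb : pb ≠ qb)
    (hab : G.dist a b = 2) (hwa : G.Adj w a) (hwb : G.Adj w b)
    (hzw : G.dist z w = 3) : False := by
  have hc := hm.1
  have hza_ne : z ≠ a := by
    rintro rfl; rw [dist_adj (G.adj_symm hwa)] at hzw; omega
  have hzb_ne : z ≠ b := by
    rintro rfl; rw [dist_adj (G.adj_symm hwb)] at hzw; omega
  have dza : G.dist z a = 2 := dist_two_of hm (G.adj_symm hzpa) hpaa hza_ne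
  have dzb : G.dist z b = 2 := dist_two_of hm (G.adj_symm hzpb) hpbb hzb_ne
  obtain ⟨p, hap, hbp, hzp1⟩ := med2 hm hab (by rw [dza, dzb])
  have hzp : G.Adj z p := adj_of_dist_one (by omega)
  obtain ⟨a', hza', ha'a, ha'p⟩ : ∃ a', G.Adj z a' ∧ G.Adj a' a ∧ a' ≠ p := by
    rcases square_corner hm hzpa hpaa hzqa hqaa hpqa hza_ne hzp (G.adj_symm hap) with rfl | rfl
    · exact ⟨qa, hzqa, hqaa, Ne.symm hpqa⟩
    · exact ⟨pa, hzpa, hpaa, hpqa⟩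
  obtain ⟨b', hzb', hb'b, hb'p⟩ : ∃ b', G.Adj z b' ∧ G.Adj b' b ∧ b' ≠ p := by
    rcases square_corner hm hzpb hpbb hzqb hqbb hpqb hzb_ne hzp (G.adj_symm hbp) with rfl | rfl
    · exact ⟨qb, hzqb, hqbb, Ne.symm hpqb⟩
    · exact ⟨pb, hzpb, hpbb, hpqb⟩
  have ha'b' : a' ≠ b' := by
    intro h
    have hba' : G.Adj b a' := by rw [h]; exact G.adj_symm hb'b
    have := K23 hm hap (G.adj_symm hwa) (G.adj_symm ha'a) hbp (G.adj_symm hwb) hba'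
      (ne_of_dist_to (by rw [dist_adj hzp, hzw]; omega))
      (Ne.symm ha'p)
      (Ne.symm (ne_of_dist_to (by rw [dist_adj hza', hzw]; omega)))
    exact (ne_of_dist_pos (by rw [hab]; omega)) this
  exact L3core hm hcf hzp (G.adj_symm hap) (G.adj_symm hbp) hza' ha'a hzb' hb'b ha'p hb'p ha'b'
    hab hwa hwb hzw

end Forbidden

/- ===================== convexity of the star ===================== -/

section Convexity

variable {V : Type*} {G : SimpleGraph V}

lemma starPt_dist_le (hm : MedianGraph G) {z v : V} (h : StarPt G z v) :
    G.dist z v ≤ 2 := by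
  rcases h with rfl | h | ⟨h1, h2, p, q, hpq, hzp, hpv, hzq, hqv⟩
  · rw [dself]; omega
  · rw [dist_adj h]; omega
  · rw [sq_dist hm h1 h2 hzp hpv]

lemma caseZ (hm : MedianGraph G) {z b w : V} (hb : StarPt G z b)
    (hw : G.dist z w + G.dist w b = G.dist z b)
    (hwz : G.dist z w ≠ 0) (hwb : G.dist w b ≠ 0) : StarPt G z w := by
  have h2 := starPt_dist_le hm hb
  exact Or.inr (Or.inl (adj_of_dist_one (by omega)))

lemma caseNN (hm : MedianGraph G) {z a b w : V} (hza : G.Adj z a) (hzb : G.Adj z b)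
    (hw : G.dist a w + G.dist w b = G.dist a b)
    (hwa : G.dist a w ≠ 0) (hwb : G.dist w b ≠ 0) : StarPt G z w := by
  have hc := hm.1
  by_cases hab : a = b
  · subst hab
    rw [dself] at hw
    omega
  have dab : G.dist a b = 2 := dist_two_of hm hza hzb hab
  have h1 : G.dist a w = 1 ∧ G.dist w b = 1 := by omega
  have haw : G.Adj a w := adj_of_dist_one h1.1
  rcases adj_cases hm haw z with h | h
  · rw [dist_adj hza] at h
    refine Or.inr (Or.inr ⟨ne_of_dist_to (by rw [dself, h]; omega),
      not_adj_of_dist_ne_one (by rw [h]; omega), a, b, hab, hza, haw, hzb,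
      adj_of_dist_one (by rw [dcomm] at h1 ⊢; exact h1.2)⟩)
  · rw [dist_adj hza] at h
    exact Or.inl (deq hc (by omega : G.dist z w = 0)).symm

lemma caseNSq (hm : MedianGraph G) (hcf : CubeFree G) {z a b w : V} (hza : G.Adj z a)
    (hb : z ≠ b ∧ ¬G.Adj z b ∧
      ∃ p q, p ≠ q ∧ G.Adj z p ∧ G.Adj p b ∧ G.Adj z q ∧ G.Adj q b)
    (hw : G.dist a w + G.dist w b = G.dist a b)
    (hwa : G.dist a w ≠ 0) (hwb : G.dist w b ≠ 0) : StarPt G z w := by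
  obtain ⟨hzb, hnzb, p, q, hpq, hzp, hpb, hzq, hqb⟩ := hb
  have hc := hm.1
  have dza := dist_adj hza
  have dzb : G.dist z b = 2 := sq_dist hm hzb hnzb hzp hpb
  have hab_le : G.dist a b ≤ 3 := by
    have h1 := dtri hc a z b
    have c1 : G.dist a z = G.dist z a := dcomm G a z
    omega
  have hpar := dist_parity hm a b z
  have c1 : G.dist a z = G.dist z a := dcomm G a z
  have c2 : G.dist b z = G.dist z b := dcomm G b z
  have hab3 : G.dist a b = 3 := by omega
  rcases (by omega : (G.dist a w = 1 ∧ G.dist w b = 2) ∨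
      (G.dist a w = 2 ∧ G.dist w b = 1)) with ⟨h1, h2⟩ | ⟨h1, h2⟩
  · have haw : G.Adj a w := adj_of_dist_one h1
    rcases adj_cases hm haw z with h | h
    · rw [dza] at h
      obtain ⟨m, hzm, hwm, hbm⟩ := mid3 hm h h2 dzb
      have hma : a ≠ m := by
        rintro rfl
        rw [dist_adj (G.adj_symm hbm)] at hab3
        omega
      exact Or.inr (Or.inr ⟨ne_of_dist_to (by rw [dself, h]; omega),
        not_adj_of_dist_ne_one (by rw [h]; omega), a, m, hma, hza, haw, hzm, G.adj_symm hwm⟩)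
    · rw [dza] at h
      exact Or.inl (deq hc (by omega : G.dist z w = 0)).symm
  · have hwb' : G.Adj w b := adj_of_dist_one h2
    rcases adj_cases hm hwb' z with h | h
    · rw [dzb] at h
      exact Or.inr (Or.inl (adj_of_dist_one (by omega)))
    · rw [dzb] at h
      exact absurd (L1 hm hcf hza hzp hpb hzq hqb hpq (by omega) hwb' h1 hab3) id

lemma caseSqSq (hm : MedianGraph G) (hcf : CubeFree G) {z a b w : V}
    (ha : z ≠ a ∧ ¬G.Adj z a ∧
      ∃ p q, p ≠ q ∧ G.Adj z p ∧ G.Adj p a ∧ G.Adj z q ∧ G.Adj q a)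
    (hb : z ≠ b ∧ ¬G.Adj z b ∧
      ∃ p q, p ≠ q ∧ G.Adj z p ∧ G.Adj p b ∧ G.Adj z q ∧ G.Adj q b)
    (hw : G.dist a w + G.dist w b = G.dist a b)
    (hwa : G.dist a w ≠ 0) (hwb : G.dist w b ≠ 0) : StarPt G z w := by
  obtain ⟨hza_ne, hnza, pa, qa, hpqa, hzpa, hpaa, hzqa, hqaa⟩ := ha
  obtain ⟨hzb_ne, hnzb, pb, qb, hpqb, hzpb, hpbb, hzqb, hqbb⟩ := hb
  have hc := hm.1
  have dza : G.dist z a = 2 := sq_dist hm hza_ne hnza hzpa hpaa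
  have dzb : G.dist z b = 2 := sq_dist hm hzb_ne hnzb hzpb hpbb
  have hab_le : G.dist a b ≤ 4 := by
    have h1 := dtri hc a z b
    have c1 : G.dist a z = G.dist z a := dcomm G a z
    omega
  have hpar := dist_parity hm a b z
  have c1 : G.dist a z = G.dist z a := dcomm G a z
  have c2 : G.dist b z = G.dist z b := dcomm G b z
  rcases (by omega : G.dist a b = 2 ∨ G.dist a b = 4) with hab | hab
  · have h1 : G.dist a w = 1 ∧ G.dist w b = 1 := by omega
    have haw : G.Adj a w := adj_of_dist_one h1.1
    have hwb' : G.Adj w b := adj_of_dist_one h1.2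
    rcases adj_cases hm haw z with h | h
    · rw [dza] at h
      exact absurd (L3 hm hcf hzpa hpaa hzqa hqaa hpqa hzpb hpbb hzqb hqbb hpqb hab
        (G.adj_symm haw) hwb' h) id
    · rw [dza] at h
      exact Or.inr (Or.inl (adj_of_dist_one (by omega)))
  · rcases (by omega : (G.dist a w = 1 ∧ G.dist w b = 3) ∨
        (G.dist a w = 2 ∧ G.dist w b = 2) ∨
        (G.dist a w = 3 ∧ G.dist w b = 1)) with ⟨h1, h2⟩ | ⟨h1, h2⟩ | ⟨h1, h2⟩
    · have haw : G.Adj a w := adj_of_dist_one h1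
      rcases adj_cases hm haw z with h | h
      · rw [dza] at h
        exact absurd (L2 hm hcf hzpa hpaa hzqa hqaa hpqa dzb h haw h2 hab) id
      · rw [dza] at h
        exact Or.inr (Or.inl (adj_of_dist_one (by omega)))
    · have hpar2 := dist_parity hm z w a
      have c3 : G.dist w a = G.dist a w := dcomm G w a
      have hle : G.dist z w ≤ 4 := by
        have t := dtri hc z a w
        omega
      rcases (by omega : G.dist z w = 0 ∨ G.dist z w = 2 ∨ G.dist z w = 4) with h | h | h
      · exact Or.inl (deq hc h).symm
      · obtain ⟨m, hzm, hwm, ham⟩ := mid3 hm h (by omega : G.dist w a = 2) dza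
        obtain ⟨m', hzm', hwm', hbm'⟩ := mid3 hm h h2 dzb
        have hmm' : m ≠ m' := by
          rintro rfl
          have t1 := dtri hc a m b
          rw [dist_adj ham, dist_adj (G.adj_symm hbm')] at t1
          omega
        exact Or.inr (Or.inr ⟨ne_of_dist_to (by rw [dself, h]; omega),
          not_adj_of_dist_ne_one (by rw [h]; omega), m, m', hmm', hzm, G.adj_symm hwm, hzm',
          G.adj_symm hwm'⟩)
      · obtain ⟨w1, haw1, hw1w⟩ := step_toward hc (by omega : G.dist a w = 1 + 1)
        have dw1b : G.dist w1 b = 3 := by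
          have t1 := dtri hc w1 w b
          have t2 := dtri hc a w1 b
          have e1 : G.dist a w1 = 1 := dist_adj haw1
          omega
        have dzw1 : G.dist z w1 = 3 := by
          have t1 := dtri hc z w1 w
          have t2 := dtri hc z a w1
          have e1 : G.dist a w1 = 1 := dist_adj haw1
          omega
        exact absurd (L2 hm hcf hzpa hpaa hzqa hqaa hpqa dzb dzw1 haw1 dw1b hab) id
    · have hwb' : G.Adj w b := adj_of_dist_one h2
      rcases adj_cases hm hwb' z with h | h
      · rw [dzb] at h
        exact Or.inr (Or.inl (adj_of_dist_one (by omega)))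
      · rw [dzb] at h
        have hab' : G.dist b a = 4 := by have e := dcomm G b a; omega
        have hwa' : G.dist w a = 3 := by have e := dcomm G w a; omega
        exact absurd (L2 hm hcf hzpb hpbb hzqb hqbb hpqb dza (by omega) (G.adj_symm hwb')
          hwa' hab') id

lemma starPt_convex (hm : MedianGraph G) (hcf : CubeFree G) {z a b w : V}
    (ha : StarPt G z a) (hb : StarPt G z b)
    (hw : G.dist a w + G.dist w b = G.dist a b) : StarPt G z w := by
  have hc := hm.1
  by_cases hwa : G.dist a w = 0
  · exact (deq hc hwa) ▸ ha
  by_cases hwb0 : G.dist w b = 0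
  · rw [show w = b from deq hc hwb0]; exact hb
  have hw' : G.dist b w + G.dist w a = G.dist b a := by
    have e1 := dcomm G a w
    have e2 := dcomm G w b
    have e3 := dcomm G a b
    omega
  have hwa' : G.dist b w ≠ 0 := by have e := dcomm G b w; omega
  have hwb0' : G.dist w a ≠ 0 := by have e := dcomm G w a; omega
  rcases ha with rfl | hza | hsa
  · exact caseZ hm hb hw hwa hwb0
  · rcases hb with rfl | hzb | hsb
    · exact caseZ hm (Or.inr (Or.inl hza)) hw' hwa' hwb0'
    · exact caseNN hm hza hzb hw hwa hwb0
    · exact caseNSq hm hcf hza hsb hw hwa hwb0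
  · rcases hb with rfl | hzb | hsb
    · exact caseZ hm (Or.inr (Or.inr hsa)) hw' hwa' hwb0'
    · exact caseNSq hm hcf hzb hsa hw' hwa' hwb0'
    · exact caseSqSq hm hcf hsa hsb hw hwa hwb0

end Convexity

/- ===================== gatedness of the star ===================== -/

section Gate

variable {V : Type*} {G : SimpleGraph V}

lemma star_gated (hm : MedianGraph G) (hcf : CubeFree G) (z w : V) :
    ∃ g, IsGate G (gStar G z) w g := by
  have hc := hm.1
  have hTne : {n | ∃ g ∈ gStar G z, G.dist w g = n}.Nonempty :=
    ⟨G.dist w z, z, self_mem_star z, rfl⟩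
  obtain ⟨g, hgS, hgd⟩ := Nat.sInf_mem hTne
  refine ⟨g, hgS, ?_⟩
  intro h hhS
  obtain ⟨m, ⟨h1, h2, h3⟩, -⟩ := hm.2 w g h
  simp only [mem_gInterval] at h1 h2 h3
  have hmS : m ∈ gStar G z := (mem_star_iff hm hcf).mpr
    (starPt_convex hm hcf ((mem_star_iff hm hcf).mp hgS) ((mem_star_iff hm hcf).mp hhS) h2)
  have hmin : G.dist w g ≤ G.dist w m := by
    rw [hgd]
    exact Nat.sInf_le ⟨m, hmS, rfl⟩
  have hmg : m = g := deq hc (by omega : G.dist m g = 0)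
  subst hmg
  have e1 := dcomm G h m
  have e2 := dcomm G m w
  have e3 := dcomm G h w
  omega

lemma gate_unique (hc : G.Connected) {S : Set V} {v g g' : V}
    (h1 : IsGate G S v g) (h2 : IsGate G S v g') : g = g' := by
  have e1 := h1.2 g' h2.1
  have e2 := h2.2 g h1.1
  have e3 := dcomm G g g'
  exact deq hc (by omega : G.dist g g' = 0)

lemma imprint_reach (hc : G.Connected) {u t : V} {A : Set V} (h : t ∈ A) :
    ∃ a ∈ imprints G u A, G.dist u a + G.dist a t = G.dist u t := by
  have hTne : {n | ∃ a, a ∈ A ∧ (G.dist u a + G.dist a t = G.dist u t) ∧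
      G.dist u a = n}.Nonempty :=
    ⟨G.dist u t, t, h, by rw [dself]; omega, rfl⟩
  obtain ⟨a, haA, hat, had⟩ := Nat.sInf_mem hTne
  refine ⟨a, ⟨haA, ?_⟩, hat⟩
  ext b
  simp only [Set.mem_inter_iff, mem_gInterval, Set.mem_singleton_iff]
  constructor
  · rintro ⟨hb1, hb2⟩
    have hbt : G.dist u b + G.dist b t = G.dist u t := by
      have t1 := dtri hc b a t
      have t2 := dtri hc u b t
      omega
    have hmin : G.dist u a ≤ G.dist u b := by
      rw [had]
      exact Nat.sInf_le ⟨b, hb2, hbt, rfl⟩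
    exact deq hc (by omega : G.dist b a = 0)
  · rintro rfl
    exact ⟨by rw [dself]; omega, haA⟩

end Gate


/-- Distance formula for 1-neighboring vertices: `u` in a panel `F(x)`, `v` in a
neighboring cone `F(y)`; `u₁, u₂` the imprints of `u` on `∂*F(x)` and `v⁺` the gate
of `v` in `F(x)`. -/
theorem dist_one_neighboring {V : Type*} (G : SimpleGraph V)
    (hG : MedianGraph G) (hcf : CubeFree G) (z x y u v u₁ u₂ vp : V)
    (hpanel : G.dist x z = 1) (hcone : G.dist y z = 2)
    (hu : IsGate G (gStar G z) u x) (hv : IsGate G (gStar G z) v y)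
    (hnb : Neighboring G (gStar G z) x y)
    (himp : imprints G u (totalBdry G (gStar G z) x) = {u₁, u₂})
    (hvp : IsGate G (fiber G (gStar G z) x) v vp) :
    G.dist u v =
      min (G.dist u u₁ + G.dist u₁ vp) (G.dist u u₂ + G.dist u₂ vp)
        + G.dist vp v := by
  have hc := hG.1
  have hufib : u ∈ fiber G (gStar G z) x := hu
  have hvpfib : vp ∈ fiber G (gStar G z) x := hvp.1
  have hkey : G.dist v u = G.dist v vp + G.dist vp u := hvp.2 u hufib
  have hxy : x ≠ y := by
    intro h
    rw [h, hcone] at hpanel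
    omega
  have hvvp : v ≠ vp := by
    rintro rfl
    exact hxy (gate_unique hc hvpfib hv)
  have hD : G.dist vp v ≠ 0 := by
    intro h
    have e := dcomm G v vp
    exact hvvp (deq hc (by omega))
  obtain ⟨w, hvpw, hwv⟩ := step_toward hc
    (show G.dist vp v = (G.dist vp v - 1) + 1 by omega)
  obtain ⟨g, hg⟩ := star_gated hG hcf z w
  have hgx : g ≠ x := by
    rintro rfl
    have hwfib : w ∈ fiber G (gStar G z) g := hg
    have h2 := hvp.2 w hwfib
    have e1 : G.dist vp w = 1 := dist_adj hvpw
    have e2 : G.dist v w = G.dist w v := dcomm G v w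
    have e3 : G.dist v vp = G.dist vp v := dcomm G v vp
    omega
  have hxg : G.Adj x g := by
    have h1 : G.dist vp g = G.dist vp x + G.dist x g := hvpfib.2 g hg.1
    have h2 : G.dist w x = G.dist w g + G.dist g x := hg.2 x hu.1
    have h3 : G.dist vp g ≤ G.dist vp w + G.dist w g := dtri hc vp w g
    have h4 : G.dist w x ≤ G.dist w vp + G.dist vp x := dtri hc w vp x
    have e1 : G.dist vp w = 1 := dist_adj hvpw
    have e2 : G.dist w vp = 1 := by rw [dcomm]; exact e1
    have e3 : G.dist x g = G.dist g x := dcomm G x g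
    have e5 : G.dist x g ≠ 0 := fun hh => hgx (deq hc hh).symm
    exact adj_of_dist_one (by omega)
  have hvpbd : vp ∈ totalBdry G (gStar G z) x := by
    refine Set.mem_iUnion.mpr ⟨g, Set.mem_iUnion.mpr ⟨⟨hg.1, hxg⟩, ?_⟩⟩
    exact ⟨hvpfib, w, hg, hvpw⟩
  obtain ⟨a, haimp, hadist⟩ := imprint_reach hc (u := u) hvpbd
  have ha12 : a = u₁ ∨ a = u₂ := by
    have : a ∈ ({u₁, u₂} : Set V) := himp ▸ haimp
    simpa using this
  have t1 : G.dist u vp ≤ G.dist u u₁ + G.dist u₁ vp := dtri hc u u₁ vp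
  have t2 : G.dist u vp ≤ G.dist u u₂ + G.dist u₂ vp := dtri hc u u₂ vp
  have e1 : G.dist u v = G.dist v u := dcomm G u v
  have e2 : G.dist vp u = G.dist u vp := dcomm G vp u
  have e3 : G.dist v vp = G.dist vp v := dcomm G v vp
  rcases ha12 with rfl | rfl <;> omega
end
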